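/- Every finite simple graph with minimum degree at least 3 contains a subdivision of the complete graph K_4. -/

import Mathlib

open SimpleGraph

/-- `G` contains a subdivision of `H`: there are branch vertices (an injection of `V(H)`
into `V(G)`) and internally disjoint paths in `G` corresponding to the edges of `H`. -/
def SimpleGraph.ContainsSubdivision {α β : Type*} (G : SimpleGraph α) (H : SimpleGraph β) :
    Prop :=
  ∃ (f : β ↪ α) (p : ∀ ⦃u v : β⦄, H.Adj u v → G.Walk (f u) (f v)),
    (∀ ⦃u v : β⦄ (h : H.Adj u v), (p h).IsPath) ∧
    (∀ ⦃u v : β⦄ (h : H.Adj u v) (x : β), f x ∈ (p h).support → x = u ∨ x = v) ∧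
    (∀ ⦃u v u' v' : β⦄ (h : H.Adj u v) (h' : H.Adj u' v'),
      s(u, v) ≠ s(u', v') → ∀ x, x ∈ (p h).support → x ∈ (p h').support →
        (x = f u ∨ x = f v) ∧ (x = f u' ∨ x = f v'))

section Machinery
open SimpleGraph Walk Finset
variable {V : Type*} {G G' : SimpleGraph V}


lemma isPath_append {u v w : V} {p : G.Walk u v} {q : G.Walk v w} (hp : p.IsPath)
    (hq : q.IsPath) (h : ∀ z, z ∈ p.support → z ∈ q.support → z = v) :
    (p.append q).IsPath := by
  rw [Walk.isPath_def, Walk.support_append]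
  refine List.Nodup.append hp.support_nodup (hq.support_nodup.tail) ?_
  intro z hzp hzq
  have hzq' : z ∈ q.support := List.mem_of_mem_tail hzq
  have : z = v := h z hzp hzq'
  subst this
  -- v is head of q.support, and support is nodup, so v ∉ tail
  have := hq.support_nodup
  rw [Walk.support_eq_cons] at this
  exact (List.nodup_cons.mp this).1 hzq

lemma exists_adj_of_mem_support {u v : V} {p : G'.Walk u v} (hnil : ¬ p.Nil) {z : V}
    (hz : z ∈ p.support) : ∃ w, G'.Adj z w := by
  induction p with
  | nil => simp at hnil
  | @cons a b c h q ih =>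
    rw [Walk.support_cons] at hz
    rcases List.mem_cons.mp hz with rfl | hz
    · exact ⟨b, h⟩
    · cases q with
      | nil => simp at hz; subst hz; exact ⟨a, h.symm⟩
      | cons h' q' => exact ih (by simp) hz


open scoped Classical in
noncomputable def substWalk (G G' : SimpleGraph V) {x y : V} (R : G.Walk x y)
    (hle : ∀ ⦃a b⦄, G'.Adj a b → G.Adj a b ∨ s(a, b) = s(x, y)) :
    ∀ {u v : V}, G'.Walk u v → G.Walk u v
  | _, _, .nil => .nil
  | u, v, .cons (v := b) h q =>
    if hG : G.Adj u b then .cons hG (substWalk G G' R hle q)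
    else
      if h1 : u = x then
        (R.copy h1.symm (by
          rcases Sym2.eq_iff.mp ((hle h).resolve_left hG) with ⟨ha, hb⟩ | ⟨ha, hb⟩
          · exact hb.symm
          · rw [hb, ← h1, ha])).append (substWalk G G' R hle q)
      else
        (R.reverse.copy (by
          rcases Sym2.eq_iff.mp ((hle h).resolve_left hG) with ⟨ha, hb⟩ | ⟨ha, hb⟩
          · exact absurd ha h1
          · exact ha.symm) (by
          rcases Sym2.eq_iff.mp ((hle h).resolve_left hG) with ⟨ha, hb⟩ | ⟨ha, hb⟩
          · exact absurd ha h1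
          · exact hb.symm)).append (substWalk G G' R hle q)

open scoped Classical in
lemma substWalk_support {x y : V} (R : G.Walk x y)
    (hle : ∀ ⦃a b⦄, G'.Adj a b → G.Adj a b ∨ s(a, b) = s(x, y))
    {u v : V} (p : G'.Walk u v) (z : V) (hz : z ∈ (substWalk G G' R hle p).support) :
    z ∈ p.support ∨ (z ∈ R.support ∧ z ≠ x ∧ z ≠ y) := by
  induction p with
  | nil => left; simpa [substWalk] using hz
  | @cons u b v h q ih =>
    rw [substWalk] at hz
    by_cases hG : G.Adj u b
    · rw [dif_pos hG, Walk.support_cons] at hz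
      rcases List.mem_cons.mp hz with rfl | hz
      · left; simp
      · rcases ih hz with h' | h'
        · left; simp [h']
        · right; exact h'
    · rw [dif_neg hG] at hz
      have he : s(u, b) = s(x, y) := (hle h).resolve_left hG
      have hxy : (u = x ∧ b = y) ∨ (u = y ∧ b = x) := Sym2.eq_iff.mp he
      by_cases h1 : u = x
      · rw [dif_pos h1, Walk.mem_support_append_iff, Walk.support_copy] at hz
        have hb : b = y := by
          rcases hxy with ⟨ha, hb⟩ | ⟨ha, hb⟩
          · exact hb
          · rw [hb, ← h1, ha]
        rcases hz with hz | hz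
        · by_cases hzx : z = x
          · left; rw [hzx, ← h1]; exact Walk.start_mem_support _
          · by_cases hzy : z = y
            · left; rw [hzy, ← hb, Walk.support_cons]
              exact List.mem_cons_of_mem _ q.start_mem_support
            · right; exact ⟨hz, hzx, hzy⟩
        · rcases ih hz with h' | h'
          · left; simp [h']
          · right; exact h'
      · rw [dif_neg h1, Walk.mem_support_append_iff, Walk.support_copy,
          Walk.support_reverse, List.mem_reverse] at hz
        have ha : u = y := by
          rcases hxy with ⟨ha, hb⟩ | ⟨ha, hb⟩
          · exact absurd ha h1
          · exact ha
        have hb : b = x := by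
          rcases hxy with ⟨ha', hb⟩ | ⟨ha', hb⟩
          · exact absurd ha' h1
          · exact hb
        rcases hz with hz | hz
        · by_cases hzx : z = x
          · left; rw [hzx, ← hb, Walk.support_cons]
            exact List.mem_cons_of_mem _ q.start_mem_support
          · by_cases hzy : z = y
            · left; rw [hzy, ← ha]; exact Walk.start_mem_support _
            · right; exact ⟨hz, hzx, hzy⟩
        · rcases ih hz with h' | h'
          · left; simp [h']
          · right; exact h'

section
variable {x y : V} (R : G.Walk x y)
  (hle : ∀ ⦃a b⦄, G'.Adj a b → G.Adj a b ∨ s(a, b) = s(x, y))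


lemma substWalk_support_of_not_mem_edges {u v : V} (p : G'.Walk u v)
    (he : s(x, y) ∉ p.edges) : (substWalk G G' R hle p).support = p.support := by
  induction p with
  | nil => simp [substWalk]
  | @cons u b v h q ih =>
    have h1 : s(u, b) ≠ s(x, y) := by
      intro hc; exact he (by rw [Walk.edges_cons, ← hc]; exact List.mem_cons_self)
    have hG : G.Adj u b := (hle h).resolve_right h1
    rw [substWalk, dif_pos hG, Walk.support_cons, Walk.support_cons,
      ih (fun hc => he (by rw [Walk.edges_cons]; exact List.mem_cons_of_mem _ hc))]

lemma substWalk_isPath (hR : R.IsPath) {u v : V} (p : G'.Walk u v) (hp : p.IsPath)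
    (hdisj : ∀ z ∈ R.support, z = x ∨ z = y ∨ z ∉ p.support) :
    (substWalk G G' R hle p).IsPath := by
  induction p with
  | nil => rw [substWalk]; exact Walk.IsPath.nil
  | @cons u b v h q ih =>
    rw [Walk.cons_isPath_iff] at hp
    have hq : (substWalk G G' R hle q).IsPath := by
      refine ih hp.1 ?_
      intro z hz
      rcases hdisj z hz with h' | h' | h'
      · exact Or.inl h'
      · exact Or.inr (Or.inl h')
      · exact Or.inr (Or.inr (fun hc => h' (by rw [Walk.support_cons]; exact List.mem_cons_of_mem _ hc)))
    rw [substWalk]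
    by_cases hG : G.Adj u b
    · rw [dif_pos hG, Walk.cons_isPath_iff]
      refine ⟨hq, fun hc => ?_⟩
      rcases substWalk_support R hle q u hc with h' | ⟨h1, h2, h3⟩
      · exact hp.2 h'
      · rcases hdisj u h1 with h' | h' | h'
        · exact h2 h'
        · exact h3 h'
        · exact h' (Walk.start_mem_support _)
    · rw [dif_neg hG]
      have he : s(u, b) = s(x, y) := (hle h).resolve_left hG
      have hxy := Sym2.eq_iff.mp he
      by_cases h1 : u = x
      · have hb : b = y := by
          rcases hxy with ⟨ha, hb⟩ | ⟨ha, hb⟩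
          · exact hb
          · rw [hb, ← h1, ha]
        rw [dif_pos h1]
        have hnq : s(x, y) ∉ q.edges := fun hc =>
          hp.2 (h1 ▸ Walk.fst_mem_support_of_mem_edges q hc)
        refine isPath_append ((Walk.isPath_copy _ _ _).mpr hR) ?_ ?_
        · rw [Walk.isPath_def, substWalk_support_of_not_mem_edges R hle q hnq]
          exact hp.1.support_nodup
        · intro z hz1 hz2
          rw [Walk.support_copy] at hz1
          rw [substWalk_support_of_not_mem_edges R hle q hnq] at hz2
          rcases hdisj z hz1 with h' | h' | h'
          · exact absurd (h' ▸ hz2 : x ∈ q.support) (h1 ▸ hp.2)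
          · exact h'.trans hb.symm
          · exact absurd (by rw [Walk.support_cons]; exact List.mem_cons_of_mem _ hz2) h'
      · have ha : u = y := by
          rcases hxy with ⟨ha, hb⟩ | ⟨ha, hb⟩
          · exact absurd ha h1
          · exact ha
        have hb : b = x := by
          rcases hxy with ⟨ha', hb⟩ | ⟨ha', hb⟩
          · exact absurd ha' h1
          · exact hb
        rw [dif_neg h1]
        have hnq : s(x, y) ∉ q.edges := fun hc =>
          hp.2 (ha ▸ Walk.snd_mem_support_of_mem_edges q hc)
        refine isPath_append ((Walk.isPath_copy _ _ _).mpr hR.reverse) ?_ ?_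
        · rw [Walk.isPath_def, substWalk_support_of_not_mem_edges R hle q hnq]
          exact hp.1.support_nodup
        · intro z hz1 hz2
          rw [Walk.support_copy, Walk.support_reverse, List.mem_reverse] at hz1
          rw [substWalk_support_of_not_mem_edges R hle q hnq] at hz2
          rcases hdisj z hz1 with h' | h' | h'
          · exact h'.trans hb.symm
          · exact absurd (h' ▸ hz2 : y ∈ q.support) (ha ▸ hp.2)
          · exact absurd (by rw [Walk.support_cons]; exact List.mem_cons_of_mem _ hz2) h'
end


/-- Surgery: delete all edges meeting `S`, then add the edges in `ps`. -/
def surg (G : SimpleGraph V) (S : Set V) (ps : List (V × V)) : SimpleGraph V where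
  Adj a b := (G.Adj a b ∧ a ∉ S ∧ b ∉ S) ∨
    (a ≠ b ∧ ∃ p ∈ ps, (a = p.1 ∧ b = p.2) ∨ (a = p.2 ∧ b = p.1))
  symm := by
    constructor
    intro a b h
    rcases h with ⟨h1, h2, h3⟩ | ⟨h1, p, hp, h2⟩
    · exact Or.inl ⟨h1.symm, h3, h2⟩
    · exact Or.inr ⟨h1.symm, p, hp, by tauto⟩
  loopless := by constructor; intro a h; rcases h with ⟨h1, _⟩ | ⟨h1, _⟩; exacts [G.loopless.irrefl a h1, h1 rfl]

lemma surg_adj (G : SimpleGraph V) (S : Set V) (ps : List (V × V)) (a b : V) :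
    (surg G S ps).Adj a b ↔ (G.Adj a b ∧ a ∉ S ∧ b ∉ S) ∨
      (a ≠ b ∧ ∃ p ∈ ps, (a = p.1 ∧ b = p.2) ∨ (a = p.2 ∧ b = p.1)) := Iff.rfl

/-- instance-free degree -/
noncomputable def dd (G : SimpleGraph V) (z : V) : ℕ := (G.neighborSet z).ncard

variable [Fintype V]

lemma dd_eq_degree (G : SimpleGraph V) [DecidableRel G.Adj] (z : V) :
    dd G z = G.degree z := by
  rw [dd, degree, neighborFinset_def, Set.ncard_eq_toFinset_card']

section helpers
variable (G : SimpleGraph V)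

lemma dd_eq_card (z : V) : ∀ [DecidableRel G.Adj], dd G z = (G.neighborFinset z).card := by
  intro _; rw [dd, neighborFinset_def, Set.ncard_eq_toFinset_card']

lemma one_le_dd {a b : V} (h : G.Adj a b) : 1 ≤ dd G a := by
  classical
  rw [dd_eq_card]
  refine card_pos.mpr ⟨b, ?_⟩
  simpa [mem_neighborFinset] using h

lemma dd_eq_zero (a : V) (h : ∀ b, ¬ G.Adj a b) : dd G a = 0 := by
  classical
  rw [dd_eq_card, card_eq_zero, eq_empty_iff_forall_notMem]
  intro b hb
  exact h b (by simpa [mem_neighborFinset] using hb)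

lemma three_le_dd_of {z a b c : V} (h1 : G.Adj z a) (h2 : G.Adj z b) (h3 : G.Adj z c)
    (hab : a ≠ b) (hac : a ≠ c) (hbc : b ≠ c) : 3 ≤ dd G z := by
  classical
  rw [dd_eq_card]
  have hsub : ({a, b, c} : Finset V) ⊆ G.neighborFinset z := by
    intro w hw
    simp only [mem_insert, mem_singleton] at hw
    rcases hw with rfl | rfl | rfl <;> simp [h1, h2, h3]
  calc 3 = ({a, b, c} : Finset V).card := by
        rw [card_insert_of_notMem (by simp [hab, hac]), card_insert_of_notMem (by simp [hbc]),
          card_singleton]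
    _ ≤ _ := card_le_card hsub

lemma nbrs_of_dd_one {v : V} (h : dd G v = 1) :
    ∃ x, G.Adj v x ∧ ∀ w, G.Adj v w → w = x := by
  classical
  rw [dd_eq_card, card_eq_one] at h
  obtain ⟨x, hx⟩ := h
  refine ⟨x, ?_, fun w hw => ?_⟩
  · rw [← mem_neighborFinset, hx]; simp
  · rw [← mem_neighborFinset, hx, mem_singleton] at hw; exact hw

lemma nbrs_of_dd_two {v : V} (h : dd G v = 2) :
    ∃ x y, x ≠ y ∧ G.Adj v x ∧ G.Adj v y ∧ ∀ w, G.Adj v w → w = x ∨ w = y := by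
  classical
  rw [dd_eq_card, card_eq_two] at h
  obtain ⟨x, y, hxy, hN⟩ := h
  refine ⟨x, y, hxy, ?_, ?_, ?_⟩
  · rw [← mem_neighborFinset, hN]; simp
  · rw [← mem_neighborFinset, hN]; simp
  · intro w hw
    rw [← mem_neighborFinset, hN] at hw
    simpa using hw

lemma nbrs_of_dd_three {z a b : V} (h : dd G z = 3) (ha : G.Adj z a) (hb : G.Adj z b)
    (hab : a ≠ b) :
    ∃ c, c ≠ a ∧ c ≠ b ∧ G.Adj z c ∧ ∀ w, G.Adj z w → w = a ∨ w = b ∨ w = c := by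
  classical
  rw [dd_eq_card] at h
  have hsub : ({a, b} : Finset V) ⊆ G.neighborFinset z := by
    intro w hw
    simp only [mem_insert, mem_singleton] at hw
    rcases hw with rfl | rfl <;> simp [ha, hb]
  have hcard : (G.neighborFinset z \ {a, b}).card = 1 := by
    rw [card_sdiff_of_subset hsub, h, card_insert_of_notMem (by simp [hab]), card_singleton]
  obtain ⟨c, hc⟩ := card_eq_one.mp hcard
  have hcmem : c ∈ G.neighborFinset z \ ({a, b} : Finset V) := by rw [hc]; simp
  simp only [mem_sdiff, mem_neighborFinset, mem_insert, mem_singleton] at hcmem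
  refine ⟨c, fun h' => hcmem.2 (Or.inl h'), fun h' => hcmem.2 (Or.inr h'), hcmem.1, ?_⟩
  intro w hw
  by_cases hwa : w = a
  · exact Or.inl hwa
  by_cases hwb : w = b
  · exact Or.inr (Or.inl hwb)
  have : w ∈ G.neighborFinset z \ ({a, b} : Finset V) := by
    simp [hwa, hwb, hw, mem_neighborFinset]
  rw [hc, mem_singleton] at this
  exact Or.inr (Or.inr this)

lemma nbrs_of_dd_three' {z a : V} (h : dd G z = 3) (ha : G.Adj z a) :
    ∃ p q, p ≠ q ∧ p ≠ a ∧ q ≠ a ∧ G.Adj z p ∧ G.Adj z q ∧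
      ∀ w, G.Adj z w → w = a ∨ w = p ∨ w = q := by
  classical
  rw [dd_eq_card] at h
  have hsub : ({a} : Finset V) ⊆ G.neighborFinset z := by
    intro w hw; rw [mem_singleton] at hw; subst hw; simpa [mem_neighborFinset] using ha
  have hcard : (G.neighborFinset z \ {a}).card = 2 := by
    rw [card_sdiff_of_subset hsub, h, card_singleton]
  obtain ⟨p, q, hpq, hc⟩ := card_eq_two.mp hcard
  have hp : p ∈ G.neighborFinset z \ ({a} : Finset V) := by rw [hc]; simp
  have hq : q ∈ G.neighborFinset z \ ({a} : Finset V) := by rw [hc]; simp [hpq]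
  simp only [mem_sdiff, mem_neighborFinset, mem_singleton] at hp hq
  refine ⟨p, q, hpq, hp.2, hq.2, hp.1, hq.1, ?_⟩
  intro w hw
  by_cases hwa : w = a
  · exact Or.inl hwa
  have : w ∈ G.neighborFinset z \ ({a} : Finset V) := by simp [hwa, hw, mem_neighborFinset]
  rw [hc, mem_insert, mem_singleton] at this
  tauto

lemma exists_two_nbrs_ne {v : V} (h : 3 ≤ dd G v) (t : V) :
    ∃ a b, a ≠ b ∧ a ≠ t ∧ b ≠ t ∧ G.Adj v a ∧ G.Adj v b := by
  classical
  rw [dd_eq_card] at h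
  have hcard : 2 ≤ (G.neighborFinset v \ {t}).card := by
    have h2 := card_le_card_sdiff_add_card (s := G.neighborFinset v) (t := {t})
    rw [card_singleton] at h2
    omega
  obtain ⟨a, ha, b, hb, hab⟩ := one_lt_card.mp (show 1 < (G.neighborFinset v \ {t}).card by omega)
  simp only [mem_sdiff, mem_neighborFinset, mem_singleton] at ha hb
  exact ⟨a, b, hab, ha.2, hb.2, ha.1, hb.1⟩

lemma exists_three_nbrs_ne {v : V} (h : 4 ≤ dd G v) (t : V) :
    ∃ a b c, a ≠ b ∧ a ≠ c ∧ b ≠ c ∧ a ≠ t ∧ b ≠ t ∧ c ≠ t ∧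
      G.Adj v a ∧ G.Adj v b ∧ G.Adj v c := by
  classical
  rw [dd_eq_card] at h
  have hcard : 3 ≤ (G.neighborFinset v \ {t}).card := by
    have h2 := card_le_card_sdiff_add_card (s := G.neighborFinset v) (t := {t})
    rw [card_singleton] at h2
    omega
  obtain ⟨s, hs, hcard3⟩ := exists_subset_card_eq hcard
  obtain ⟨a, b, c, hab, hac, hbc, hseq⟩ := card_eq_three.mp hcard3
  have hmem : ∀ x ∈ s, G.Adj v x ∧ x ≠ t := by
    intro x hx
    have := hs hx
    simp only [mem_sdiff, mem_neighborFinset, mem_singleton] at this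
    exact this
  have ha := hmem a (by rw [hseq]; simp)
  have hb := hmem b (by rw [hseq]; simp)
  have hc := hmem c (by rw [hseq]; simp)
  exact ⟨a, b, c, hab, hac, hbc, ha.2, hb.2, hc.2, ha.1, hb.1, hc.1⟩

lemma exists_third_nbr {z a b : V} (h : 3 ≤ dd G z) (hab : a ≠ b) :
    ∃ c, c ≠ a ∧ c ≠ b ∧ G.Adj z c := by
  classical
  rw [dd_eq_card] at h
  by_contra hc
  push_neg at hc
  have : G.neighborFinset z ⊆ {a, b} := by
    intro w hw
    rw [mem_neighborFinset] at hw
    simp only [mem_insert, mem_singleton]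
    by_contra hw'
    push_neg at hw'
    exact hc w hw'.1 hw'.2 hw
  have := card_le_card this
  have h2 : ({a, b} : Finset V).card ≤ 2 := card_insert_le _ _ |>.trans (by simp)
  omega

end helpers

noncomputable def kk (G : SimpleGraph V) : ℕ := {z | ∃ w, G.Adj z w}.ncard

noncomputable def meas (G : SimpleGraph V) : ℕ :=
  kk G * (Fintype.card (Sym2 V) + 1) + G.edgeSet.ncard

lemma kk_le_of_sub {G G' : SimpleGraph V}
    (hsub : ∀ z, (∃ w, G'.Adj z w) → ∃ w, G.Adj z w) : kk G' ≤ kk G :=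
  Set.ncard_le_ncard (fun z hz => hsub z hz) (Set.toFinite _)

lemma meas_lt_of_isolating {G G' : SimpleGraph V}
    (hsub : ∀ z, (∃ w, G'.Adj z w) → ∃ w, G.Adj z w) (v : V)
    (hv : ∃ w, G.Adj v w) (hv' : ∀ w, ¬ G'.Adj v w) : meas G' < meas G := by
  have hk : kk G' < kk G := by
    apply Set.ncard_lt_ncard _ (Set.toFinite _)
    constructor
    · exact fun z hz => hsub z hz
    · intro hc
      obtain ⟨w, hw⟩ := hc (Set.mem_setOf.mpr hv)
      exact hv' w hw
  have hm : G'.edgeSet.ncard ≤ Fintype.card (Sym2 V) := by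
    classical
    rw [Set.ncard_eq_toFinset_card']
    simpa using card_le_univ (G'.edgeSet.toFinset)
  calc meas G' = kk G' * (Fintype.card (Sym2 V) + 1) + G'.edgeSet.ncard := rfl
    _ < (kk G' + 1) * (Fintype.card (Sym2 V) + 1) := by
        rw [add_mul, one_mul]; omega
    _ ≤ kk G * (Fintype.card (Sym2 V) + 1) := Nat.mul_le_mul_right _ hk
    _ ≤ meas G := Nat.le_add_right _ _

lemma meas_lt_of_subgraph {G G' : SimpleGraph V}
    (hsub : G' ≤ G) {a b : V} (hab : G.Adj a b) (hab' : ¬ G'.Adj a b) : meas G' < meas G := by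
  have hk : kk G' ≤ kk G := kk_le_of_sub (fun z ⟨w, hw⟩ => ⟨w, hsub hw⟩)
  have hm : G'.edgeSet.ncard < G.edgeSet.ncard := by
    apply Set.ncard_lt_ncard _ (Set.toFinite _)
    constructor
    · exact edgeSet_subset_edgeSet.mpr hsub
    · intro hc
      exact hab' ((mem_edgeSet G').mp (hc ((mem_edgeSet G).mpr hab)))
  unfold meas
  have := Nat.mul_le_mul_right (Fintype.card (Sym2 V) + 1) hk
  omega

def K4w (a b c d : V)
    (w1 : G.Walk a b) (w2 : G.Walk a c) (w3 : G.Walk a d)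
    (w4 : G.Walk b c) (w5 : G.Walk b d) (w6 : G.Walk c d) :
    ∀ u v : Fin 4, G.Walk (![a,b,c,d] u) (![a,b,c,d] v)
  | 0, 0 => Walk.nil
  | 0, 1 => w1
  | 0, 2 => w2
  | 0, 3 => w3
  | 1, 0 => w1.reverse
  | 1, 1 => Walk.nil
  | 1, 2 => w4
  | 1, 3 => w5
  | 2, 0 => w2.reverse
  | 2, 1 => w4.reverse
  | 2, 2 => Walk.nil
  | 2, 3 => w6
  | 3, 0 => w3.reverse
  | 3, 1 => w5.reverse
  | 3, 2 => w6.reverse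
  | 3, 3 => Walk.nil

lemma khelp (a b c d : V) (hab : a ≠ b) (hac : a ≠ c) (had : a ≠ d)
    (hbc : b ≠ c) (hbd : b ≠ d) (hcd : c ≠ d)
    (e1 : G.Adj a b) (e2 : G.Adj a c) (e3 : G.Adj a d) (e4 : G.Adj b c) (e5 : G.Adj b d)
    (q : G.Walk c d) {u v : Fin 4} {f : V}
    (hx : f ∈ (K4w a b c d e1.toWalk e2.toWalk e3.toWalk e4.toWalk e5.toWalk q u v).support) :
    (f = ![a,b,c,d] u ∨ f = ![a,b,c,d] v) ∨
      (f ∈ q.support ∧ s(u, v) = s((2 : Fin 4), (3 : Fin 4))) := by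
  fin_cases u <;> fin_cases v <;>
    simp_all [K4w, Adj.toWalk, Walk.support_reverse] <;> tauto

lemma k4_of_walks (a b c d : V) (hab : a ≠ b) (hac : a ≠ c) (had : a ≠ d)
    (hbc : b ≠ c) (hbd : b ≠ d) (hcd : c ≠ d)
    (e1 : G.Adj a b) (e2 : G.Adj a c) (e3 : G.Adj a d) (e4 : G.Adj b c) (e5 : G.Adj b d)
    (q : G.Walk c d) (hq : q.IsPath) (haq : a ∉ q.support) (hbq : b ∉ q.support) :
    G.ContainsSubdivision (completeGraph (Fin 4)) := by
  have finj : Function.Injective (![a,b,c,d] : Fin 4 → V) := by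
    intro i j hij
    fin_cases i <;> fin_cases j <;> simp_all
  refine ⟨⟨![a,b,c,d], finj⟩, fun u v _ => K4w a b c d e1.toWalk e2.toWalk e3.toWalk
    e4.toWalk e5.toWalk q u v, ?_, ?_, ?_⟩
  · intro u v h
    have h' : u ≠ v := by simpa using h
    fin_cases u <;> fin_cases v <;>
      simp_all [K4w, Walk.isPath_reverse_iff, Adj.toWalk] <;>
      first
        | exact Walk.IsPath.cons Walk.IsPath.nil (by simp [Ne.symm, *])
        | exact fun hcc => by simp_all [eq_comm]
        | skip
  · intro u v h x hx
    rcases khelp a b c d hab hac had hbc hbd hcd e1 e2 e3 e4 e5 q (f := ![a,b,c,d] x) hx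
      with hc | ⟨hc, hs⟩
    · rcases hc with hc | hc
      · exact Or.inl (finj hc)
      · exact Or.inr (finj hc)
    · -- f x ∈ q.support and {u,v} = {2,3}
      rcases Sym2.eq_iff.mp hs with ⟨rfl, rfl⟩ | ⟨rfl, rfl⟩ <;>
      · fin_cases x <;> simp_all
  · intro u v u' v' h h' hne x hx1 hx2
    have hmem : ∀ (i : Fin 4), (![a,b,c,d] i) ∈ q.support →
        ![a,b,c,d] i = c ∨ ![a,b,c,d] i = d := by
      intro i hi; fin_cases i <;> simp_all
    rcases khelp a b c d hab hac had hbc hbd hcd e1 e2 e3 e4 e5 q hx1 with hc1 | ⟨hc1, hs1⟩ <;>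
      rcases khelp a b c d hab hac had hbc hbd hcd e1 e2 e3 e4 e5 q hx2 with hc2 | ⟨hc2, hs2⟩
    · exact ⟨hc1, hc2⟩
    · refine ⟨hc1, ?_⟩
      have hxcd : x = c ∨ x = d := by
        rcases hc1 with hc | hc
        · rw [hc] at hc2 ⊢; exact hmem _ hc2
        · rw [hc] at hc2 ⊢; exact hmem _ hc2
      rcases Sym2.eq_iff.mp hs2 with ⟨rfl, rfl⟩ | ⟨rfl, rfl⟩ <;> simp <;> tauto
    · refine ⟨?_, hc2⟩
      have hxcd : x = c ∨ x = d := by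
        rcases hc2 with hc | hc
        · rw [hc] at hc1 ⊢; exact hmem _ hc1
        · rw [hc] at hc1 ⊢; exact hmem _ hc1
      rcases Sym2.eq_iff.mp hs1 with ⟨rfl, rfl⟩ | ⟨rfl, rfl⟩ <;> simp <;> tauto
    · exact absurd (hs1.trans hs2.symm) hne

open SimpleGraph in
lemma lift_subdivision {β : Type*} {H : SimpleGraph β} (hHa : ∀ a : β, ∃ b, H.Adj a b)
    {x y : V} (R : G.Walk x y) (hR : R.IsPath)
    (hle : ∀ ⦃a b⦄, G'.Adj a b → G.Adj a b ∨ s(a, b) = s(x, y))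
    (hiso : ∀ z ∈ R.support, z = x ∨ z = y ∨ ∀ w, ¬ G'.Adj z w)
    (hsub : G'.ContainsSubdivision H) : G.ContainsSubdivision H := by
  obtain ⟨f, p, h1, h2, h3⟩ := hsub
  have hnil : ∀ ⦃u v : β⦄ (h : H.Adj u v), ¬ (p h).Nil := by
    intro u v h hc
    exact (f.injective.ne h.ne) (Walk.Nil.eq hc)
  -- membership in a walk's support implies non-isolated
  have hmem : ∀ ⦃u v : β⦄ (h : H.Adj u v) {z : V}, z ∈ (p h).support → ∃ w, G'.Adj z w :=
    fun u v h z hz => exists_adj_of_mem_support (hnil h) hz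
  have hdisj : ∀ ⦃u v : β⦄ (h : H.Adj u v), ∀ z ∈ R.support, z = x ∨ z = y ∨ z ∉ (p h).support := by
    intro u v h z hz
    rcases hiso z hz with h' | h' | h'
    · exact Or.inl h'
    · exact Or.inr (Or.inl h')
    · refine Or.inr (Or.inr (fun hc => ?_))
      obtain ⟨w, hw⟩ := hmem h hc
      exact h' w hw
  refine ⟨f, fun u v h => substWalk G G' R hle (p h), fun u v h => ?_, ?_, ?_⟩
  · exact substWalk_isPath R hle hR _ (h1 h) (hdisj h)
  · intro u v h a ha
    rcases substWalk_support R hle _ _ ha with h' | ⟨hz, hzx, hzy⟩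
    · exact h2 h a h'
    · rcases hiso _ hz with h' | h' | h'
      · exact absurd h' hzx
      · exact absurd h' hzy
      · obtain ⟨b, hb⟩ := hHa a
        obtain ⟨w, hw⟩ := hmem hb ((p hb).start_mem_support)
        exact absurd hw (h' w)
  · intro u v u' v' h h' hne z hz1 hz2
    have key : ∀ ⦃a b : β⦄ (hab : H.Adj a b), z ∈ (substWalk G G' R hle (p hab)).support →
        z ∈ (p hab).support ∨ s(x, y) ∈ (p hab).edges := by
      intro a b hab hzz
      by_cases he : s(x, y) ∈ (p hab).edges
      · exact Or.inr he
      · rw [substWalk_support_of_not_mem_edges R hle _ he] at hzz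
        exact Or.inl hzz
    have hisoR : z ∈ R.support → z ≠ x → z ≠ y → False := by
      intro hz hzx hzy
      rcases hiso z hz with hh | hh | hh
      · exact hzx hh
      · exact hzy hh
      · rcases substWalk_support R hle _ _ hz1 with hmem1 | _
        · obtain ⟨w, hw⟩ := hmem h hmem1
          exact hh w hw
        · rcases substWalk_support R hle _ _ hz2 with hmem2 | _
          · obtain ⟨w, hw⟩ := hmem h' hmem2
            exact hh w hw
          · -- z not on either original walk; both walks use the edge s(x,y)
            rcases key h hz1 with hmem1 | he1
            · obtain ⟨w, hw⟩ := hmem h hmem1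
              exact hh w hw
            rcases key h' hz2 with hmem2 | he2
            · obtain ⟨w, hw⟩ := hmem h' hmem2
              exact hh w hw
            -- both edges used: derive s(u,v) = s(u',v')
            have hx1 := h2 h
            have hxu : x ∈ (p h).support := Walk.fst_mem_support_of_mem_edges _ he1
            have hyu : y ∈ (p h).support := Walk.snd_mem_support_of_mem_edges _ he1
            have hxu' : x ∈ (p h').support := Walk.fst_mem_support_of_mem_edges _ he2
            have hyu' : y ∈ (p h').support := Walk.snd_mem_support_of_mem_edges _ he2
            have hX := h3 h h' hne x hxu hxu'
            have hY := h3 h h' hne y hyu hyu'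
            have hxyne : x ≠ y := by
              have : G'.Adj x y := (p h).adj_of_mem_edges he1
              exact this.ne
            apply hne
            have fi := f.injective
            have e1 : s(x, y) = s(f u, f v) := by
              rcases hX.1 with hx1 | hx1 <;> rcases hY.1 with hy1 | hy1
              · exact absurd (hx1.trans hy1.symm) hxyne
              · rw [hx1, hy1]
              · rw [hx1, hy1]; exact Sym2.eq_swap
              · exact absurd (hx1.trans hy1.symm) hxyne
            have e2 : s(x, y) = s(f u', f v') := by
              rcases hX.2 with hx1 | hx1 <;> rcases hY.2 with hy1 | hy1
              · exact absurd (hx1.trans hy1.symm) hxyne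
              · rw [hx1, hy1]
              · rw [hx1, hy1]; exact Sym2.eq_swap
              · exact absurd (hx1.trans hy1.symm) hxyne
            rcases Sym2.eq_iff.mp (e1.symm.trans e2) with ⟨ha, hb⟩ | ⟨ha, hb⟩
            · rw [Sym2.eq_iff]; exact Or.inl ⟨fi ha, fi hb⟩
            · rw [Sym2.eq_iff]; exact Or.inr ⟨fi ha, fi hb⟩
    rcases substWalk_support R hle _ _ hz1 with hm1 | ⟨hzR, hzx, hzy⟩
    · rcases substWalk_support R hle _ _ hz2 with hm2 | ⟨hzR, hzx, hzy⟩
      · exact h3 h h' hne z hm1 hm2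
      · exact (hisoR hzR hzx hzy).elim
    · exact (hisoR hzR hzx hzy).elim


lemma mono_subdivision {β : Type*} {H : SimpleGraph β} {G G' : SimpleGraph V} (hle : G' ≤ G)
    (h : G'.ContainsSubdivision H) : G.ContainsSubdivision H := by
  obtain ⟨f, p, h1, h2, h3⟩ := h
  have he : ∀ ⦃u v⦄ (hh : H.Adj u v), ∀ e ∈ (p hh).edges, e ∈ G.edgeSet :=
    fun u v hh e hee => edgeSet_subset_edgeSet.mpr hle ((Walk.edges_subset_edgeSet _) hee)
  refine ⟨f, fun u v hh => (p hh).transfer G (he hh), fun u v hh => (h1 hh).transfer (he hh), ?_, ?_⟩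
  · intro u v hh x hx; rw [Walk.support_transfer] at hx; exact h2 hh x hx
  · intro u v u' v' hh hh' hne x hx1 hx2
    rw [Walk.support_transfer] at hx1 hx2
    exact h3 hh hh' hne x hx1 hx2

def lowAt (G : SimpleGraph V) (z : V) : Prop := 1 ≤ dd G z ∧ dd G z ≤ 2


section Surgery
variable {V : Type*} [Fintype V] {G : SimpleGraph V}

lemma surg_nonisolated {S : Set V} {ps : List (V × V)}
    (hps : ∀ p ∈ ps, (∃ w, G.Adj p.1 w) ∧ (∃ w, G.Adj p.2 w)) :
    ∀ z, (∃ w, (surg G S ps).Adj z w) → ∃ w, G.Adj z w := by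
  rintro z ⟨w, hw⟩
  rcases hw with ⟨h, _, _⟩ | ⟨hne, p, hp, hc⟩
  · exact ⟨w, h⟩
  · rcases hc with ⟨rfl, rfl⟩ | ⟨rfl, rfl⟩
    · exact (hps p hp).1
    · exact (hps p hp).2

lemma surg_isolated {S : Set V} {ps : List (V × V)} (a : V) (ha : a ∈ S)
    (hps : ∀ p ∈ ps, p.1 ≠ a ∧ p.2 ≠ a) : ∀ b, ¬ (surg G S ps).Adj a b := by
  intro b hb
  rcases hb with ⟨_, h2, _⟩ | ⟨hne, p, hp, hc⟩
  · exact h2 ha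
  · rcases hc with ⟨h1, _⟩ | ⟨h1, _⟩
    · exact (hps p hp).1 h1.symm
    · exact (hps p hp).2 h1.symm

lemma surg_adj_untouched {S : Set V} {ps : List (V × V)} (z : V) (hz : z ∉ S)
    (hnb : ∀ b ∈ S, ¬ G.Adj z b) (hps : ∀ p ∈ ps, p.1 ≠ z ∧ p.2 ≠ z) :
    ∀ b, (surg G S ps).Adj z b ↔ G.Adj z b := by
  intro b
  constructor
  · intro hb
    rcases hb with ⟨h, _, _⟩ | ⟨hne, p, hp, hc⟩
    · exact h
    · rcases hc with ⟨h1, _⟩ | ⟨h1, _⟩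
      · exact absurd h1.symm (hps p hp).1
      · exact absurd h1.symm (hps p hp).2
  · intro hb
    refine Or.inl ⟨hb, hz, fun hbS => hnb b hbS hb⟩

lemma dd_eq_of_adj_iff {G G' : SimpleGraph V} {a : V} (h : ∀ b, G'.Adj a b ↔ G.Adj a b) :
    dd G' a = dd G a := by
  unfold dd
  congr 1
  ext w
  simp only [mem_neighborSet]
  exact h w

lemma surg_le (S : Set V) (G : SimpleGraph V) : surg G S [] ≤ G := by
  intro a b h
  rcases h with ⟨h, _, _⟩ | ⟨_, p, hp, _⟩
  · exact h
  · simp at hp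

/-- unique-low extraction: any vertex other than the designated low vertex with an edge
has degree ≥ 3 -/
lemma high_of_ne {G : SimpleGraph V} (hlow : ∀ z w, lowAt G z → lowAt G w → z = w)
    {v z w : V} (hv : lowAt G v) (hz : z ≠ v) (h1 : G.Adj z w) : 3 ≤ dd G z := by
  by_contra hc
  push_neg at hc
  exact hz (hlow z v ⟨one_le_dd G h1, by omega⟩ hv)

lemma high_of_nolow {G : SimpleGraph V} (hlow : ∀ z, ¬ lowAt G z)
    {z w : V} (h1 : G.Adj z w) : 3 ≤ dd G z := by
  by_contra hc
  push_neg at hc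
  exact hlow z ⟨one_le_dd G h1, by omega⟩

end Surgery

section Cases
variable {V : Type*} [Fintype V]

/-- The shape of the induction hypothesis. -/
def IHt (G : SimpleGraph V) : Prop :=
  ∀ (G' : SimpleGraph V), meas G' < meas G →
    (∀ z w, lowAt G' z → lowAt G' w → z = w) → (∃ z, 3 ≤ dd G' z) →
    G'.ContainsSubdivision (completeGraph (Fin 4))

lemma caseA1 (G : SimpleGraph V) (hlow : ∀ z w, lowAt G z → lowAt G w → z = w)
    (hex : ∃ z, 3 ≤ dd G z) (hih : IHt G) (v x : V) (hd : dd G v = 1)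
    (hvx : G.Adj v x) (hcomp : ∀ w, G.Adj v w → w = x) :
    G.ContainsSubdivision (completeGraph (Fin 4)) := by
  set G' := surg G {v} [] with hG'
  have hiso : ∀ b, ¬ G'.Adj v b := surg_isolated v (by simp) (by simp)
  have hunt : ∀ z, z ≠ v → z ≠ x → ∀ b, G'.Adj z b ↔ G.Adj z b := by
    intro z hzv hzx b
    refine surg_adj_untouched z (by simp [hzv]) ?_ (by simp) b
    intro c hc
    rw [Set.mem_singleton_iff] at hc
    subst hc
    exact fun hzc => hzx (hcomp z hzc.symm)
  have hvlow : lowAt G v := ⟨by omega, by omega⟩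
  have hlow' : ∀ z w, lowAt G' z → lowAt G' w → z = w := by
    have key : ∀ z, lowAt G' z → z = x := by
      intro z hz
      by_cases hzv : z = v
      · subst hzv
        rw [lowAt, dd_eq_zero G' z hiso] at hz
        omega
      by_cases hzx : z = x
      · exact hzx
      · exfalso
        rw [lowAt, dd_eq_of_adj_iff (hunt z hzv hzx)] at hz
        exact hzv (hlow z v hz hvlow)
    intro z w hz hw
    rw [key z hz, key w hw]
  have hex' : ∃ z, 3 ≤ dd G' z := by
    obtain ⟨z0, hz0⟩ := hex
    by_cases hz0v : z0 = v
    · subst hz0v; omega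
    by_cases hz0x : z0 = x
    · subst hz0x
      obtain ⟨a, b, hab, hav, hbv, ha, hb⟩ := exists_two_nbrs_ne G hz0 v
      have hax : a ≠ z0 := fun hc => G.irrefl (hc ▸ ha)
      have h3 : 3 ≤ dd G a := high_of_ne hlow hvlow hav ha.symm
      refine ⟨a, ?_⟩
      rw [dd_eq_of_adj_iff (hunt a hav hax)]
      exact h3
    · exact ⟨z0, by rw [dd_eq_of_adj_iff (hunt z0 hz0v hz0x)]; exact hz0⟩
  have hmeas : meas G' < meas G :=
    meas_lt_of_isolating (surg_nonisolated (by simp)) v ⟨x, hvx⟩ hiso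
  exact mono_subdivision (surg_le _ _) (hih G' hmeas hlow' hex')

lemma K4nbr : ∀ a : Fin 4, ∃ b, (completeGraph (Fin 4)).Adj a b := fun a =>
  ⟨a + 1, by simp [completeGraph, Fin.ext_iff, Fin.add_def]; omega⟩

lemma caseA2a (G : SimpleGraph V) (hlow : ∀ z w, lowAt G z → lowAt G w → z = w)
    (hih : IHt G) (v x y : V) (hd : dd G v = 2) (hxy : x ≠ y)
    (hvx : G.Adj v x) (hvy : G.Adj v y) (hcomp : ∀ w, G.Adj v w → w = x ∨ w = y)
    (hnadj : ¬ G.Adj x y) :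
    G.ContainsSubdivision (completeGraph (Fin 4)) := by
  have hxv : x ≠ v := fun hc => G.irrefl (hc ▸ hvx)
  have hyv : y ≠ v := fun hc => G.irrefl (hc ▸ hvy)
  have hvlow : lowAt G v := ⟨by omega, by omega⟩
  have hdx : 3 ≤ dd G x := high_of_ne hlow hvlow hxv hvx.symm
  have hdy : 3 ≤ dd G y := high_of_ne hlow hvlow hyv hvy.symm
  set G' := surg G {v} [(x, y)] with hG'
  have hiso : ∀ b, ¬ G'.Adj v b := surg_isolated v (by simp)
    (by simp [hxv, hyv])
  have hunt : ∀ z, z ≠ v → z ≠ x → z ≠ y → ∀ b, G'.Adj z b ↔ G.Adj z b := by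
    intro z hzv hzx hzy b
    refine surg_adj_untouched z (by simp [hzv]) ?_ (by simp [Ne.symm hzx, Ne.symm hzy]) b
    intro c hc
    rw [Set.mem_singleton_iff] at hc
    subst hc
    intro hzc
    rcases hcomp z hzc.symm with rfl | rfl
    · exact hzx rfl
    · exact hzy rfl
  have hG'xy : G'.Adj x y := Or.inr ⟨hxy, (x, y), by simp⟩
  have hddx' : 3 ≤ dd G' x := by
    obtain ⟨a, b, hab, hav, hbv, ha, hb⟩ := exists_two_nbrs_ne G hdx v
    have hay : a ≠ y := fun hc => hnadj (hc ▸ ha)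
    have hby : b ≠ y := fun hc => hnadj (hc ▸ hb)
    exact three_le_dd_of G' (Or.inl ⟨ha, by simp [hxv], by simp [hav]⟩)
      (Or.inl ⟨hb, by simp [hxv], by simp [hbv]⟩) hG'xy hab hay hby
  have hddy' : 3 ≤ dd G' y := by
    obtain ⟨a, b, hab, hav, hbv, ha, hb⟩ := exists_two_nbrs_ne G hdy v
    have hax : a ≠ x := fun hc => hnadj (G.adj_symm (hc ▸ ha))
    have hbx : b ≠ x := fun hc => hnadj (G.adj_symm (hc ▸ hb))
    exact three_le_dd_of G' (Or.inl ⟨ha, by simp [hyv], by simp [hav]⟩)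
      (Or.inl ⟨hb, by simp [hyv], by simp [hbv]⟩) hG'xy.symm hab hax hbx
  have hlow' : ∀ z w, lowAt G' z → lowAt G' w → z = w := by
    intro z w hz _
    exfalso
    by_cases hzv : z = v
    · subst hzv; rw [lowAt, dd_eq_zero G' z hiso] at hz; omega
    by_cases hzx : z = x
    · subst hzx; rw [lowAt] at hz; omega
    by_cases hzy : z = y
    · subst hzy; rw [lowAt] at hz; omega
    · rw [lowAt, dd_eq_of_adj_iff (hunt z hzv hzx hzy)] at hz
      exact hzv (hlow z v hz hvlow)
  have hmeas : meas G' < meas G := by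
    refine meas_lt_of_isolating (surg_nonisolated ?_) v ⟨x, hvx⟩ hiso
    intro p hp
    simp only [List.mem_singleton] at hp
    subst hp
    exact ⟨⟨v, hvx.symm⟩, ⟨v, hvy.symm⟩⟩
  have hsub' : G'.ContainsSubdivision (completeGraph (Fin 4)) :=
    hih G' hmeas hlow' ⟨x, hddx'⟩
  -- lift back: replace the new edge x-y by the path x-v-y
  refine lift_subdivision K4nbr (G' := G')
    (Walk.cons hvx.symm (Walk.cons hvy Walk.nil)) ?_ ?_ ?_ hsub'
  · simp [Walk.cons_isPath_iff, hxy, hxv, Ne.symm hyv]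
  · intro a b hab
    rcases hab with ⟨h, _, _⟩ | ⟨hne, p, hp, hc⟩
    · exact Or.inl h
    · simp only [List.mem_singleton] at hp
      subst hp
      rcases hc with ⟨rfl, rfl⟩ | ⟨rfl, rfl⟩
      · exact Or.inr rfl
      · exact Or.inr (Sym2.eq_swap)
  · intro z hz
    simp only [Walk.support_cons, Walk.support_nil, List.mem_cons, List.mem_singleton] at hz
    rcases hz with rfl | rfl | rfl | h
    · exact Or.inl rfl
    · exact Or.inr (Or.inr hiso)
    · exact Or.inr (Or.inl rfl)
    · exact absurd h List.not_mem_nil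

lemma caseA2b (G : SimpleGraph V) (hlow : ∀ z w, lowAt G z → lowAt G w → z = w)
    (hih : IHt G) (v x y : V) (hd : dd G v = 2) (hxy : x ≠ y)
    (hvx : G.Adj v x) (hvy : G.Adj v y) (hcomp : ∀ w, G.Adj v w → w = x ∨ w = y)
    (hdx : 4 ≤ dd G x) (hdy : 4 ≤ dd G y) :
    G.ContainsSubdivision (completeGraph (Fin 4)) := by
  set G' := surg G {v} [] with hG'
  have hiso : ∀ b, ¬ G'.Adj v b := surg_isolated v (by simp) (by simp)
  have hunt : ∀ z, z ≠ v → z ≠ x → z ≠ y → ∀ b, G'.Adj z b ↔ G.Adj z b := by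
    intro z hzv hzx hzy b
    refine surg_adj_untouched z (by simp [hzv]) ?_ (by simp) b
    intro c hc
    rw [Set.mem_singleton_iff] at hc
    subst hc
    intro hzc
    rcases hcomp z hzc.symm with rfl | rfl
    · exact hzx rfl
    · exact hzy rfl
  have hbig : ∀ t, t ≠ v → 4 ≤ dd G t → 3 ≤ dd G' t := by
    intro t htv h4
    obtain ⟨a, b, c, hab, hac, hbc, hav, hbv, hcv, ha, hb, hc⟩ := exists_three_nbrs_ne G h4 v
    exact three_le_dd_of G' (Or.inl ⟨ha, by simp [htv], by simp [hav]⟩)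
      (Or.inl ⟨hb, by simp [htv], by simp [hbv]⟩)
      (Or.inl ⟨hc, by simp [htv], by simp [hcv]⟩) hab hac hbc
  have hxv : x ≠ v := fun hc => G.irrefl (hc ▸ hvx)
  have hyv : y ≠ v := fun hc => G.irrefl (hc ▸ hvy)
  have hvlow : lowAt G v := ⟨by omega, by omega⟩
  have hlow' : ∀ z w, lowAt G' z → lowAt G' w → z = w := by
    intro z w hz _
    exfalso
    by_cases hzv : z = v
    · subst hzv; rw [lowAt, dd_eq_zero G' z hiso] at hz; omega
    by_cases hzx : z = x
    · subst hzx; have := hbig z hzv hdx; rw [lowAt] at hz; omega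
    by_cases hzy : z = y
    · subst hzy; have := hbig z hzv hdy; rw [lowAt] at hz; omega
    · rw [lowAt, dd_eq_of_adj_iff (hunt z hzv hzx hzy)] at hz
      exact hzv (hlow z v hz hvlow)
  have hmeas : meas G' < meas G :=
    meas_lt_of_isolating (surg_nonisolated (by simp)) v ⟨x, hvx⟩ hiso
  exact mono_subdivision (surg_le _ _) (hih G' hmeas hlow' ⟨x, hbig x hxv hdx⟩)

lemma caseA2c1 (G : SimpleGraph V) (hlow : ∀ z w, lowAt G z → lowAt G w → z = w)
    (hih : IHt G) (v x y p : V) (hd : dd G v = 2) (hxy : x ≠ y)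
    (hvx : G.Adj v x) (hvy : G.Adj v y) (hcomp : ∀ w, G.Adj v w → w = x ∨ w = y)
    (hadjxy : G.Adj x y) (hpv : p ≠ v) (hpy : p ≠ y) (hxp : G.Adj x p)
    (hxcomp : ∀ w, G.Adj x w → w = v ∨ w = y ∨ w = p) (hnpy : ¬ G.Adj p y) :
    G.ContainsSubdivision (completeGraph (Fin 4)) := by
  have hxv : x ≠ v := fun hc => G.irrefl (hc ▸ hvx)
  have hyv : y ≠ v := fun hc => G.irrefl (hc ▸ hvy)
  have hpx : p ≠ x := fun hc => G.irrefl (hc ▸ hxp)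
  have hvlow : lowAt G v := ⟨by omega, by omega⟩
  have hdp : 3 ≤ dd G p := high_of_ne hlow hvlow hpv hxp.symm
  have hdy : 3 ≤ dd G y := high_of_ne hlow hvlow hyv hvy.symm
  set G' := surg G {v, x} [(p, y)] with hG'
  have hisov : ∀ b, ¬ G'.Adj v b := surg_isolated v (by simp) (by simp [hpv, hyv])
  have hisox : ∀ b, ¬ G'.Adj x b := surg_isolated x (by simp) (by simp [hpx, Ne.symm hxy])
  have hunt : ∀ z, z ≠ v → z ≠ x → z ≠ y → z ≠ p → ∀ b, G'.Adj z b ↔ G.Adj z b := by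
    intro z hzv hzx hzy hzp b
    refine surg_adj_untouched z (by simp [hzv, hzx]) ?_
      (by simp [Ne.symm hzp, Ne.symm hzy]) b
    intro c hc
    simp only [Set.mem_insert_iff, Set.mem_singleton_iff] at hc
    rcases hc with rfl | rfl
    · intro hzc
      rcases hcomp z hzc.symm with rfl | rfl
      · exact hzx rfl
      · exact hzy rfl
    · intro hzc
      rcases hxcomp z hzc.symm with rfl | rfl | rfl
      · exact hzv rfl
      · exact hzy rfl
      · exact hzp rfl
  have hG'py : G'.Adj p y := Or.inr ⟨hpy, (p, y), by simp⟩
  have hddp' : 3 ≤ dd G' p := by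
    obtain ⟨a, b, hab, hax, hbx, ha, hb⟩ := exists_two_nbrs_ne G hdp x
    have hkey : ∀ c, G.Adj p c → c ≠ x → c ≠ v ∧ c ≠ y := by
      intro c hc hcx
      constructor
      · rintro rfl
        rcases hcomp p hc.symm with rfl | rfl
        · exact hpx rfl
        · exact hpy rfl
      · rintro rfl
        exact hnpy hc
    obtain ⟨hav, hay⟩ := hkey a ha hax
    obtain ⟨hbv, hby⟩ := hkey b hb hbx
    exact three_le_dd_of G' (Or.inl ⟨ha, by simp [hpv, hpx], by simp [hav, hax]⟩)
      (Or.inl ⟨hb, by simp [hpv, hpx], by simp [hbv, hbx]⟩) hG'py hab hay hby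
  have hlow' : ∀ z w, lowAt G' z → lowAt G' w → z = w := by
    have key : ∀ z, lowAt G' z → z = y := by
      intro z hz
      by_cases hzv : z = v
      · subst hzv; rw [lowAt, dd_eq_zero G' z hisov] at hz; omega
      by_cases hzx : z = x
      · subst hzx; rw [lowAt, dd_eq_zero G' z hisox] at hz; omega
      by_cases hzp : z = p
      · subst hzp; rw [lowAt] at hz; omega
      by_cases hzy : z = y
      · exact hzy
      · exfalso
        rw [lowAt, dd_eq_of_adj_iff (hunt z hzv hzx hzy hzp)] at hz
        exact hzv (hlow z v hz hvlow)
    intro z w hz hw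
    rw [key z hz, key w hw]
  have hmeas : meas G' < meas G := by
    refine meas_lt_of_isolating (surg_nonisolated ?_) v ⟨x, hvx⟩ hisov
    intro q hq
    simp only [List.mem_singleton] at hq
    subst hq
    exact ⟨⟨x, hxp.symm⟩, ⟨v, hvy.symm⟩⟩
  have hsub' : G'.ContainsSubdivision (completeGraph (Fin 4)) :=
    hih G' hmeas hlow' ⟨p, hddp'⟩
  refine lift_subdivision K4nbr (G' := G')
    (Walk.cons hxp.symm (Walk.cons hadjxy Walk.nil)) ?_ ?_ ?_ hsub'
  · simp [Walk.cons_isPath_iff, hpx, hpy, hxy]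
  · intro a b hab
    rcases hab with ⟨h, _, _⟩ | ⟨hne, q, hq, hc⟩
    · exact Or.inl h
    · simp only [List.mem_singleton] at hq
      subst hq
      rcases hc with ⟨rfl, rfl⟩ | ⟨rfl, rfl⟩
      · exact Or.inr rfl
      · exact Or.inr (Sym2.eq_swap)
  · intro z hz
    simp only [Walk.support_cons, Walk.support_nil, List.mem_cons, List.mem_singleton] at hz
    rcases hz with rfl | rfl | rfl | h
    · exact Or.inl rfl
    · exact Or.inr (Or.inr hisox)
    · exact Or.inr (Or.inl rfl)
    · exact absurd h List.not_mem_nil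

lemma caseA2c2 (G : SimpleGraph V) (hlow : ∀ z w, lowAt G z → lowAt G w → z = w)
    (hih : IHt G) (v x y : V) (hd : dd G v = 2) (hxy : x ≠ y)
    (hvx : G.Adj v x) (hvy : G.Adj v y) (hcomp : ∀ w, G.Adj v w → w = x ∨ w = y)
    (hdy : 4 ≤ dd G y) :
    G.ContainsSubdivision (completeGraph (Fin 4)) := by
  set G' := surg G {v} [] with hG'
  have hiso : ∀ b, ¬ G'.Adj v b := surg_isolated v (by simp) (by simp)
  have hunt : ∀ z, z ≠ v → z ≠ x → z ≠ y → ∀ b, G'.Adj z b ↔ G.Adj z b := by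
    intro z hzv hzx hzy b
    refine surg_adj_untouched z (by simp [hzv]) ?_ (by simp) b
    intro c hc
    rw [Set.mem_singleton_iff] at hc
    subst hc
    intro hzc
    rcases hcomp z hzc.symm with rfl | rfl
    · exact hzx rfl
    · exact hzy rfl
  have hyv : y ≠ v := fun hc => G.irrefl (hc ▸ hvy)
  have hvlow : lowAt G v := ⟨by omega, by omega⟩
  have hddy' : 3 ≤ dd G' y := by
    obtain ⟨a, b, c, hab, hac, hbc, hav, hbv, hcv, ha, hb, hc⟩ := exists_three_nbrs_ne G hdy v
    exact three_le_dd_of G' (Or.inl ⟨ha, by simp [hyv], by simp [hav]⟩)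
      (Or.inl ⟨hb, by simp [hyv], by simp [hbv]⟩)
      (Or.inl ⟨hc, by simp [hyv], by simp [hcv]⟩) hab hac hbc
  have hlow' : ∀ z w, lowAt G' z → lowAt G' w → z = w := by
    have key : ∀ z, lowAt G' z → z = x := by
      intro z hz
      by_cases hzv : z = v
      · subst hzv; rw [lowAt, dd_eq_zero G' z hiso] at hz; omega
      by_cases hzx : z = x
      · exact hzx
      by_cases hzy : z = y
      · subst hzy; rw [lowAt] at hz; omega
      · exfalso
        rw [lowAt, dd_eq_of_adj_iff (hunt z hzv hzx hzy)] at hz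
        exact hzv (hlow z v hz hvlow)
    intro z w hz hw
    rw [key z hz, key w hw]
  have hmeas : meas G' < meas G :=
    meas_lt_of_isolating (surg_nonisolated (by simp)) v ⟨x, hvx⟩ hiso
  exact mono_subdivision (surg_le _ _) (hih G' hmeas hlow' ⟨y, hddy'⟩)

lemma caseA2c3 (G : SimpleGraph V) (hlow : ∀ z w, lowAt G z → lowAt G w → z = w)
    (hih : IHt G) (v x y p : V) (hd : dd G v = 2) (hxy : x ≠ y)
    (hvx : G.Adj v x) (hvy : G.Adj v y) (hcomp : ∀ w, G.Adj v w → w = x ∨ w = y)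
    (hpv : p ≠ v) (hxp : G.Adj x p) (hyp : G.Adj y p)
    (hxcomp : ∀ w, G.Adj x w → w = v ∨ w = y ∨ w = p)
    (hycomp : ∀ w, G.Adj y w → w = v ∨ w = x ∨ w = p) :
    G.ContainsSubdivision (completeGraph (Fin 4)) := by
  have hxv : x ≠ v := fun hc => G.irrefl (hc ▸ hvx)
  have hyv : y ≠ v := fun hc => G.irrefl (hc ▸ hvy)
  have hpx : p ≠ x := fun hc => G.irrefl (hc ▸ hxp)
  have hpy : p ≠ y := fun hc => G.irrefl (hc ▸ hyp)
  have hvlow : lowAt G v := ⟨by omega, by omega⟩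
  have hdp : 3 ≤ dd G p := high_of_ne hlow hvlow hpv hxp.symm
  set G' := surg G {v, x, y} [] with hG'
  have hisov : ∀ b, ¬ G'.Adj v b := surg_isolated v (by simp) (by simp)
  have hisox : ∀ b, ¬ G'.Adj x b := surg_isolated x (by simp) (by simp)
  have hisoy : ∀ b, ¬ G'.Adj y b := surg_isolated y (by simp) (by simp)
  have hunt : ∀ z, z ≠ v → z ≠ x → z ≠ y → z ≠ p → ∀ b, G'.Adj z b ↔ G.Adj z b := by
    intro z hzv hzx hzy hzp b
    refine surg_adj_untouched z (by simp [hzv, hzx, hzy]) ?_ (by simp) b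
    intro c hc
    simp only [Set.mem_insert_iff, Set.mem_singleton_iff] at hc
    rcases hc with rfl | rfl | rfl
    · intro hzc
      rcases hcomp z hzc.symm with rfl | rfl
      · exact hzx rfl
      · exact hzy rfl
    · intro hzc
      rcases hxcomp z hzc.symm with rfl | rfl | rfl
      · exact hzv rfl
      · exact hzy rfl
      · exact hzp rfl
    · intro hzc
      rcases hycomp z hzc.symm with rfl | rfl | rfl
      · exact hzv rfl
      · exact hzx rfl
      · exact hzp rfl
  obtain ⟨z0, hz0x, hz0y, hz0adj⟩ := exists_third_nbr G hdp hxy (a := x) (b := y)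
  have hz0v : z0 ≠ v := by
    rintro rfl
    rcases hcomp p hz0adj.symm with rfl | rfl
    · exact hpx rfl
    · exact hpy rfl
  have hz0p : z0 ≠ p := fun hc => G.irrefl (hc ▸ hz0adj)
  have hdz0 : 3 ≤ dd G z0 := high_of_ne hlow hvlow hz0v hz0adj.symm
  have hex' : ∃ z, 3 ≤ dd G' z := by
    refine ⟨z0, ?_⟩
    rw [dd_eq_of_adj_iff (hunt z0 hz0v hz0x hz0y hz0p)]
    exact hdz0
  have hlow' : ∀ z w, lowAt G' z → lowAt G' w → z = w := by
    have key : ∀ z, lowAt G' z → z = p := by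
      intro z hz
      by_cases hzv : z = v
      · subst hzv; rw [lowAt, dd_eq_zero G' z hisov] at hz; omega
      by_cases hzx : z = x
      · subst hzx; rw [lowAt, dd_eq_zero G' z hisox] at hz; omega
      by_cases hzy : z = y
      · subst hzy; rw [lowAt, dd_eq_zero G' z hisoy] at hz; omega
      by_cases hzp : z = p
      · exact hzp
      · exfalso
        rw [lowAt, dd_eq_of_adj_iff (hunt z hzv hzx hzy hzp)] at hz
        exact hzv (hlow z v hz hvlow)
    intro z w hz hw
    rw [key z hz, key w hw]
  have hmeas : meas G' < meas G :=
    meas_lt_of_isolating (surg_nonisolated (by simp)) v ⟨x, hvx⟩ hisov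
  exact mono_subdivision (surg_le _ _) (hih G' hmeas hlow' hex')

lemma exists_nbr {G : SimpleGraph V} {v : V} (h : 1 ≤ dd G v) : ∃ w, G.Adj v w := by
  have : (G.neighborSet v).Nonempty := by
    apply Set.nonempty_of_ncard_ne_zero
    unfold dd at h
    omega
  obtain ⟨w, hw⟩ := this
  exact ⟨w, hw⟩

lemma caseB1 (G : SimpleGraph V) (hnl : ∀ z, ¬ lowAt G z) (hih : IHt G)
    (v u : V) (hd : 4 ≤ dd G v) (hvu : G.Adj v u) :
    G.ContainsSubdivision (completeGraph (Fin 4)) := by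
  set G' := G.deleteEdges {s(v, u)} with hG'
  have hvune : v ≠ u := hvu.ne
  have hadj' : ∀ a b, G'.Adj a b ↔ G.Adj a b ∧ s(a, b) ≠ s(v, u) := by
    intro a b
    rw [hG', deleteEdges_adj, Set.mem_singleton_iff]
  have hunt : ∀ z, z ≠ v → z ≠ u → ∀ b, G'.Adj z b ↔ G.Adj z b := by
    intro z hzv hzu b
    rw [hadj']
    constructor
    · exact fun h => h.1
    · intro h
      refine ⟨h, fun hc => ?_⟩
      rcases Sym2.eq_iff.mp hc with ⟨rfl, rfl⟩ | ⟨rfl, rfl⟩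
      · exact hzv rfl
      · exact hzu rfl
  have hddv' : 3 ≤ dd G' v := by
    obtain ⟨a, b, c, hab, hac, hbc, hau, hbu, hcu, ha, hb, hc⟩ := exists_three_nbrs_ne G hd u
    have key : ∀ t, G.Adj v t → t ≠ u → G'.Adj v t := by
      intro t ht htu
      rw [hadj']
      refine ⟨ht, fun hc => ?_⟩
      rcases Sym2.eq_iff.mp hc with ⟨_, rfl⟩ | ⟨h1, _⟩
      · exact htu rfl
      · exact hvune h1
    exact three_le_dd_of G' (key a ha hau) (key b hb hbu) (key c hc hcu) hab hac hbc
  have hlow' : ∀ z w, lowAt G' z → lowAt G' w → z = w := by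
    have key : ∀ z, lowAt G' z → z = u := by
      intro z hz
      by_cases hzv : z = v
      · subst hzv; rw [lowAt] at hz; omega
      by_cases hzu : z = u
      · exact hzu
      · exfalso
        rw [lowAt, dd_eq_of_adj_iff (hunt z hzv hzu)] at hz
        exact hnl z hz
    intro z w hz hw
    rw [key z hz, key w hw]
  have hmeas : meas G' < meas G := by
    refine meas_lt_of_subgraph (G.deleteEdges_le _) hvu ?_
    rw [hadj']
    simp
  exact mono_subdivision (G.deleteEdges_le _) (hih G' hmeas hlow' ⟨v, hddv'⟩)

lemma caseAllEq (G : SimpleGraph V) (t1 t2 t3 u : V)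
    (h12 : G.Adj t1 t2) (h13 : G.Adj t1 t3) (h23 : G.Adj t2 t3)
    (hu1 : G.Adj t1 u) (hu2 : G.Adj t2 u) (hu3 : G.Adj t3 u) :
    G.ContainsSubdivision (completeGraph (Fin 4)) := by
  refine k4_of_walks t1 t2 t3 u h12.ne h13.ne hu1.ne h23.ne hu2.ne hu3.ne
    h12 h13 hu1 h23 hu2 hu3.toWalk ?_ ?_ ?_
  · simp [Adj.toWalk, Walk.cons_isPath_iff, hu3.ne]
  · simp [Adj.toWalk, h13.ne, hu1.ne]
  · simp [Adj.toWalk, h23.ne, hu2.ne]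

lemma caseTwoEq (G : SimpleGraph V) (hnl : ∀ z, ¬ lowAt G z) (hih : IHt G)
    (t1 t2 t3 u w : V)
    (h12 : G.Adj t1 t2) (h13 : G.Adj t1 t3) (h23 : G.Adj t2 t3)
    (hu1 : G.Adj t1 u) (hu2 : G.Adj t2 u) (hw3 : G.Adj t3 w)
    (hut3 : u ≠ t3) (hwt1 : w ≠ t1) (hwt2 : w ≠ t2) (hne : u ≠ w)
    (c1 : ∀ z, G.Adj t1 z → z = t2 ∨ z = t3 ∨ z = u)
    (c2 : ∀ z, G.Adj t2 z → z = t1 ∨ z = t3 ∨ z = u)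
    (c3 : ∀ z, G.Adj t3 z → z = t1 ∨ z = t2 ∨ z = w) :
    G.ContainsSubdivision (completeGraph (Fin 4)) := by
  have hut1 : u ≠ t1 := fun hc => G.irrefl (hc ▸ hu1)
  have hut2 : u ≠ t2 := fun hc => G.irrefl (hc ▸ hu2)
  have hwt3 : w ≠ t3 := fun hc => G.irrefl (hc ▸ hw3)
  by_cases huw : G.Adj u w
  · -- direct TK4 : branch vertices t1 t2 t3 u, with path t3-w-u
    refine k4_of_walks t1 t2 t3 u h12.ne h13.ne hu1.ne h23.ne hu2.ne
      (Ne.symm hut3) h12 h13 hu1 h23 hu2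
      (Walk.cons hw3 (Walk.cons huw.symm Walk.nil)) ?_ ?_ ?_
    · simp [Walk.cons_isPath_iff, Ne.symm hwt3, hne.symm, Ne.symm hut3, hwt3]
    · simp [h13.ne, hu1.ne, Ne.symm hwt1]
    · simp [h23.ne, hu2.ne, Ne.symm hwt2]
  · -- surgery
    have hdw : 3 ≤ dd G w := high_of_nolow hnl hw3.symm
    set G' := surg G {t1, t2, t3} [(u, w)] with hG'
    have hiso1 : ∀ b, ¬ G'.Adj t1 b := surg_isolated t1 (by simp)
      (by simp [hut1, hwt1])
    have hiso2 : ∀ b, ¬ G'.Adj t2 b := surg_isolated t2 (by simp)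
      (by simp [hut2, hwt2])
    have hiso3 : ∀ b, ¬ G'.Adj t3 b := surg_isolated t3 (by simp)
      (by simp [hut3, hwt3])
    have hG'uw : G'.Adj u w := Or.inr ⟨hne, (u, w), by simp⟩
    have hddw' : 3 ≤ dd G' w := by
      obtain ⟨a, b, hab, hat3, hbt3, ha, hb⟩ := exists_two_nbrs_ne G hdw t3
      have key : ∀ c, G.Adj w c → c ≠ t3 → c ≠ t1 ∧ c ≠ t2 ∧ c ≠ u := by
        intro c hc hct3
        refine ⟨?_, ?_, ?_⟩
        · rintro rfl
          rcases c1 w hc.symm with rfl | rfl | rfl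
          · exact hwt2 rfl
          · exact hwt3 rfl
          · exact hne rfl
        · rintro rfl
          rcases c2 w hc.symm with rfl | rfl | rfl
          · exact hwt1 rfl
          · exact hwt3 rfl
          · exact hne rfl
        · rintro rfl
          exact huw hc.symm
      obtain ⟨hat1, hat2, hau⟩ := key a ha hat3
      obtain ⟨hbt1, hbt2, hbu⟩ := key b hb hbt3
      exact three_le_dd_of G'
        (Or.inl ⟨ha, by simp [hwt1, hwt2, hwt3], by simp [hat1, hat2, hat3]⟩)
        (Or.inl ⟨hb, by simp [hwt1, hwt2, hwt3], by simp [hbt1, hbt2, hbt3]⟩)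
        hG'uw.symm hab hau hbu
    have hunt : ∀ z, z ≠ t1 → z ≠ t2 → z ≠ t3 → z ≠ u → z ≠ w →
        ∀ b, G'.Adj z b ↔ G.Adj z b := by
      intro z hz1 hz2 hz3 hzu hzw b
      refine surg_adj_untouched z (by simp [hz1, hz2, hz3]) ?_
        (by simp [Ne.symm hzu, Ne.symm hzw]) b
      intro c hc
      simp only [Set.mem_insert_iff, Set.mem_singleton_iff] at hc
      rcases hc with rfl | rfl | rfl
      · intro hzc
        rcases c1 z hzc.symm with rfl | rfl | rfl
        · exact hz2 rfl
        · exact hz3 rfl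
        · exact hzu rfl
      · intro hzc
        rcases c2 z hzc.symm with rfl | rfl | rfl
        · exact hz1 rfl
        · exact hz3 rfl
        · exact hzu rfl
      · intro hzc
        rcases c3 z hzc.symm with rfl | rfl | rfl
        · exact hz1 rfl
        · exact hz2 rfl
        · exact hzw rfl
    have hlow' : ∀ z w', lowAt G' z → lowAt G' w' → z = w' := by
      have key : ∀ z, lowAt G' z → z = u := by
        intro z hz
        by_cases hz1 : z = t1
        · subst hz1; rw [lowAt, dd_eq_zero G' z hiso1] at hz; omega
        by_cases hz2 : z = t2
        · subst hz2; rw [lowAt, dd_eq_zero G' z hiso2] at hz; omega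
        by_cases hz3 : z = t3
        · subst hz3; rw [lowAt, dd_eq_zero G' z hiso3] at hz; omega
        by_cases hzu : z = u
        · exact hzu
        by_cases hzw : z = w
        · subst hzw; rw [lowAt] at hz; omega
        · exfalso
          rw [lowAt, dd_eq_of_adj_iff (hunt z hz1 hz2 hz3 hzu hzw)] at hz
          exact hnl z hz
      intro z w' hz hw'
      rw [key z hz, key w' hw']
    have hmeas : meas G' < meas G := by
      refine meas_lt_of_isolating (surg_nonisolated ?_) t1 ⟨t2, h12⟩ hiso1
      intro q hq
      simp only [List.mem_singleton] at hq
      subst hq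
      exact ⟨⟨t1, hu1.symm⟩, ⟨t3, hw3.symm⟩⟩
    have hsub' : G'.ContainsSubdivision (completeGraph (Fin 4)) :=
      hih G' hmeas hlow' ⟨w, hddw'⟩
    refine lift_subdivision K4nbr (G' := G')
      (Walk.cons hu1.symm (Walk.cons h13 (Walk.cons hw3 Walk.nil))) ?_ ?_ ?_ hsub'
    · simp [Walk.cons_isPath_iff, hut1, hut3, hne, h13.ne, Ne.symm hwt1, Ne.symm hwt3]
    · intro a b hab
      rcases hab with ⟨h, _, _⟩ | ⟨hne', q, hq, hc⟩
      · exact Or.inl h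
      · simp only [List.mem_singleton] at hq
        subst hq
        rcases hc with ⟨rfl, rfl⟩ | ⟨rfl, rfl⟩
        · exact Or.inr rfl
        · exact Or.inr (Sym2.eq_swap)
    · intro z hz
      simp only [Walk.support_cons, Walk.support_nil, List.mem_cons, List.mem_singleton] at hz
      rcases hz with rfl | rfl | rfl | rfl | h
      · exact Or.inl rfl
      · exact Or.inr (Or.inr hiso1)
      · exact Or.inr (Or.inr hiso3)
      · exact Or.inr (Or.inl rfl)
      · exact absurd h List.not_mem_nil

lemma caseAllDiff (G : SimpleGraph V) (hnl : ∀ z, ¬ lowAt G z) (hih : IHt G)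
    (t1 t2 t3 u1 u2 u3 : V)
    (h12 : G.Adj t1 t2) (h13 : G.Adj t1 t3) (h23 : G.Adj t2 t3)
    (hu1 : G.Adj t1 u1) (hu2 : G.Adj t2 u2) (hu3 : G.Adj t3 u3)
    (hu1t2 : u1 ≠ t2) (hu1t3 : u1 ≠ t3) (hu2t1 : u2 ≠ t1) (hu2t3 : u2 ≠ t3)
    (hu3t1 : u3 ≠ t1) (hu3t2 : u3 ≠ t2)
    (d12 : u1 ≠ u2) (d13 : u1 ≠ u3) (d23 : u2 ≠ u3)
    (c1 : ∀ z, G.Adj t1 z → z = t2 ∨ z = t3 ∨ z = u1)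
    (c2 : ∀ z, G.Adj t2 z → z = t1 ∨ z = t3 ∨ z = u2)
    (c3 : ∀ z, G.Adj t3 z → z = t1 ∨ z = t2 ∨ z = u3) :
    G.ContainsSubdivision (completeGraph (Fin 4)) := by
  have hu1t1 : u1 ≠ t1 := fun hc => G.irrefl (hc ▸ hu1)
  have hu2t2 : u2 ≠ t2 := fun hc => G.irrefl (hc ▸ hu2)
  have hu3t3 : u3 ≠ t3 := fun hc => G.irrefl (hc ▸ hu3)
  set G' := surg G {t2, t3} [(t1, u2), (t1, u3)] with hG'
  have hiso2 : ∀ b, ¬ G'.Adj t2 b := surg_isolated t2 (by simp)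
    (by simp [h12.ne, hu2t2, hu3t2])
  have hiso3 : ∀ b, ¬ G'.Adj t3 b := surg_isolated t3 (by simp)
    (by simp [h13.ne, hu2t3, hu3t3])
  have ht1S : t1 ∉ ({t2, t3} : Set V) := by simp [h12.ne, h13.ne]
  have hG'12 : G'.Adj t1 u2 := Or.inr ⟨Ne.symm hu2t1, (t1, u2), by simp⟩
  have hG'13 : G'.Adj t1 u3 := Or.inr ⟨Ne.symm hu3t1, (t1, u3), by simp⟩
  have hddt1' : 3 ≤ dd G' t1 := by
    refine three_le_dd_of G' (Or.inl ⟨hu1, ht1S, by simp [hu1t2, hu1t3]⟩) hG'12 hG'13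
      d12 d13 d23
  have hddu2' : 3 ≤ dd G' u2 := by
    obtain ⟨a, b, hab, hat2, hbt2, ha, hb⟩ :=
      exists_two_nbrs_ne G (high_of_nolow hnl hu2.symm) t2
    have key : ∀ c, G.Adj u2 c → c ≠ t2 → c ≠ t3 ∧ c ≠ t1 := by
      intro c hc hct2
      constructor
      · rintro rfl
        rcases c3 u2 hc.symm with rfl | rfl | rfl
        · exact hu2t1 rfl
        · exact hu2t2 rfl
        · exact d23 rfl
      · rintro rfl
        rcases c1 u2 hc.symm with rfl | rfl | rfl
        · exact hu2t2 rfl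
        · exact hu2t3 rfl
        · exact d12 rfl
    obtain ⟨hat3, hat1⟩ := key a ha hat2
    obtain ⟨hbt3, hbt1⟩ := key b hb hbt2
    refine three_le_dd_of G' (Or.inl ⟨ha, by simp [hu2t2, hu2t3], by simp [hat2, hat3]⟩)
      (Or.inl ⟨hb, by simp [hu2t2, hu2t3], by simp [hbt2, hbt3]⟩) hG'12.symm hab hat1 hbt1
  have hddu3' : 3 ≤ dd G' u3 := by
    obtain ⟨a, b, hab, hat3, hbt3, ha, hb⟩ :=
      exists_two_nbrs_ne G (high_of_nolow hnl hu3.symm) t3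
    have key : ∀ c, G.Adj u3 c → c ≠ t3 → c ≠ t2 ∧ c ≠ t1 := by
      intro c hc hct3
      constructor
      · rintro rfl
        rcases c2 u3 hc.symm with rfl | rfl | rfl
        · exact hu3t1 rfl
        · exact hu3t3 rfl
        · exact d23 rfl
      · rintro rfl
        rcases c1 u3 hc.symm with rfl | rfl | rfl
        · exact hu3t2 rfl
        · exact hu3t3 rfl
        · exact d13 rfl
    obtain ⟨hat2, hat1⟩ := key a ha hat3
    obtain ⟨hbt2, hbt1⟩ := key b hb hbt3
    refine three_le_dd_of G' (Or.inl ⟨ha, by simp [hu3t2, hu3t3], by simp [hat2, hat3]⟩)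
      (Or.inl ⟨hb, by simp [hu3t2, hu3t3], by simp [hbt2, hbt3]⟩) hG'13.symm hab hat1 hbt1
  have hunt : ∀ z, z ≠ t1 → z ≠ t2 → z ≠ t3 → z ≠ u2 → z ≠ u3 →
      ∀ b, G'.Adj z b ↔ G.Adj z b := by
    intro z hz1 hz2 hz3 hzu2 hzu3 b
    refine surg_adj_untouched z (by simp [hz2, hz3]) ?_
      (by simp [Ne.symm hz1, Ne.symm hzu2, Ne.symm hzu3]) b
    intro c hc
    simp only [Set.mem_insert_iff, Set.mem_singleton_iff] at hc
    rcases hc with rfl | rfl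
    · intro hzc
      rcases c2 z hzc.symm with rfl | rfl | rfl
      · exact hz1 rfl
      · exact hz3 rfl
      · exact hzu2 rfl
    · intro hzc
      rcases c3 z hzc.symm with rfl | rfl | rfl
      · exact hz1 rfl
      · exact hz2 rfl
      · exact hzu3 rfl
  have hlow' : ∀ z w, lowAt G' z → lowAt G' w → z = w := by
    intro z w hz _
    exfalso
    by_cases hz2 : z = t2
    · subst hz2; rw [lowAt, dd_eq_zero G' z hiso2] at hz; omega
    by_cases hz3 : z = t3
    · subst hz3; rw [lowAt, dd_eq_zero G' z hiso3] at hz; omega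
    by_cases hz1 : z = t1
    · subst hz1; rw [lowAt] at hz; omega
    by_cases hzu2 : z = u2
    · subst hzu2; rw [lowAt] at hz; omega
    by_cases hzu3 : z = u3
    · subst hzu3; rw [lowAt] at hz; omega
    · rw [lowAt, dd_eq_of_adj_iff (hunt z hz1 hz2 hz3 hzu2 hzu3)] at hz
      exact hnl z hz
  have hmeas : meas G' < meas G := by
    refine meas_lt_of_isolating (surg_nonisolated ?_) t2 ⟨t1, h12.symm⟩ hiso2
    intro q hq
    simp only [List.mem_cons, List.mem_singleton, List.not_mem_nil, or_false] at hq
    rcases hq with rfl | rfl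
    · exact ⟨⟨t2, h12⟩, ⟨t2, hu2.symm⟩⟩
    · exact ⟨⟨t2, h12⟩, ⟨t3, hu3.symm⟩⟩
  have hsub' : G'.ContainsSubdivision (completeGraph (Fin 4)) :=
    hih G' hmeas hlow' ⟨t1, hddt1'⟩
  -- first lift: to G1 = surg G {t2} [(t1, u2)], replacing edge (t1,u3) by t1-t3-u3
  set G1 := surg G {t2} [(t1, u2)] with hG1
  have hiso2' : ∀ b, ¬ G1.Adj t2 b := surg_isolated t2 (by simp) (by simp [h12.ne, hu2t2])
  have hsub1 : G1.ContainsSubdivision (completeGraph (Fin 4)) := by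
    refine lift_subdivision K4nbr (G' := G')
      (Walk.cons ((surg_adj G {t2} [(t1, u2)] t1 t3).mpr (Or.inl ⟨h13, by simp [h12.ne], by simp [Ne.symm h23.ne]⟩))
        (Walk.cons ((surg_adj G {t2} [(t1, u2)] t3 u3).mpr (Or.inl ⟨hu3, by simp [Ne.symm h23.ne], by simp [hu3t2]⟩)) Walk.nil))
      ?_ ?_ ?_ hsub'
    · simp [Walk.cons_isPath_iff, h13.ne, Ne.symm hu3t3, Ne.symm hu3t1]
    · intro a b hab
      rcases hab with ⟨h, hS1, hS2⟩ | ⟨hne', q, hq, hc⟩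
      · simp only [Set.mem_insert_iff, Set.mem_singleton_iff, not_or] at hS1 hS2
        exact Or.inl (Or.inl ⟨h, by simp [hS1.1], by simp [hS2.1]⟩)
      · simp only [List.mem_cons, List.mem_singleton, List.not_mem_nil, or_false] at hq
        rcases hq with rfl | rfl
        · exact Or.inl (Or.inr ⟨hne', (t1, u2), by simp, hc⟩)
        · rcases hc with ⟨rfl, rfl⟩ | ⟨rfl, rfl⟩
          · exact Or.inr rfl
          · exact Or.inr Sym2.eq_swap
    · intro z hz
      simp only [Walk.support_cons, Walk.support_nil, List.mem_cons, List.mem_singleton] at hz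
      rcases hz with rfl | rfl | rfl | h
      · exact Or.inl rfl
      · exact Or.inr (Or.inr hiso3)
      · exact Or.inr (Or.inl rfl)
      · exact absurd h List.not_mem_nil
  -- second lift: to G, replacing edge (t1,u2) by t1-t2-u2
  refine lift_subdivision K4nbr (G' := G1)
    (Walk.cons h12 (Walk.cons hu2 Walk.nil)) ?_ ?_ ?_ hsub1
  · simp [Walk.cons_isPath_iff, h12.ne, Ne.symm hu2t2, Ne.symm hu2t1]
  · intro a b hab
    rcases hab with ⟨h, _, _⟩ | ⟨hne', q, hq, hc⟩
    · exact Or.inl h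
    · simp only [List.mem_singleton] at hq
      subst hq
      rcases hc with ⟨rfl, rfl⟩ | ⟨rfl, rfl⟩
      · exact Or.inr rfl
      · exact Or.inr Sym2.eq_swap
  · intro z hz
    simp only [Walk.support_cons, Walk.support_nil, List.mem_cons, List.mem_singleton] at hz
    rcases hz with rfl | rfl | rfl | h
    · exact Or.inl rfl
    · exact Or.inr (Or.inr hiso2')
    · exact Or.inr (Or.inl rfl)
    · exact absurd h List.not_mem_nil

lemma caseBnotri (G : SimpleGraph V) (hnl : ∀ z, ¬ lowAt G z) (hmax : ∀ t, dd G t ≤ 3)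
    (hih : IHt G)
    (hnt : ∀ a b c, G.Adj a b → G.Adj b c → G.Adj a c → False)
    (v : V) (hdv : dd G v = 3) :
    G.ContainsSubdivision (completeGraph (Fin 4)) := by
  obtain ⟨x, hvx⟩ := exists_nbr (by omega : 1 ≤ dd G v)
  obtain ⟨y, z, hyz, hyx, hzx, hvy, hvz, hvcomp⟩ := nbrs_of_dd_three' G hdv hvx
  have hxv : x ≠ v := hvx.ne'
  have hyv : y ≠ v := hvy.ne'
  have hzv : z ≠ v := hvz.ne'
  have hdx : dd G x = 3 := by
    have h1 := high_of_nolow hnl hvx.symm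
    have h3 := hmax x
    omega
  obtain ⟨p, q, hpq, hpv, hqv, hxp, hxq, hxcomp⟩ := nbrs_of_dd_three' G hdx hvx.symm
  have hpx : p ≠ x := hxp.ne'
  have hqx : q ≠ x := hxq.ne'
  have noyz : ¬ G.Adj y z := fun h => hnt v y z hvy h hvz
  have nopq : ¬ G.Adj p q := fun h => hnt x p q hxp h hxq
  have hyp' : y ≠ p := by rintro rfl; exact hnt v x y hvx hxp hvy
  have hyq : y ≠ q := by rintro rfl; exact hnt v x y hvx hxq hvy
  have hzp : z ≠ p := by rintro rfl; exact hnt v x z hvx hxp hvz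
  have hzq : z ≠ q := by rintro rfl; exact hnt v x z hvx hxq hvz
  have hxy : ¬ G.Adj x y := fun h => hnt v x y hvx h hvy
  have hxz : ¬ G.Adj x z := fun h => hnt v x z hvx h hvz
  have hvp : ¬ G.Adj v p := fun h => hnt v p x h hxp.symm hvx
  have hvq : ¬ G.Adj v q := fun h => hnt v q x h hxq.symm hvx
  set G' := surg G {v, x} [(y, z), (p, q)] with hG'
  have hisov : ∀ b, ¬ G'.Adj v b := surg_isolated v (by simp)
    (by simp [hyv, hzv, hpv, hqv])
  have hisox : ∀ b, ¬ G'.Adj x b := surg_isolated x (by simp)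
    (by simp [hyx, hzx, hpx, hqx])
  have hG'yz : G'.Adj y z := Or.inr ⟨hyz, (y, z), by simp⟩
  have hG'pq : G'.Adj p q := Or.inr ⟨hpq, (p, q), by simp⟩
  have hddy' : 3 ≤ dd G' y := by
    obtain ⟨a, b, hab, hav, hbv, ha, hb⟩ :=
      exists_two_nbrs_ne G (high_of_nolow hnl hvy.symm) v
    have key : ∀ c, G.Adj y c → c ≠ x ∧ c ≠ z := by
      intro c hc
      constructor
      · rintro rfl; exact hxy hc.symm
      · rintro rfl; exact noyz hc
    obtain ⟨hax, haz⟩ := key a ha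
    obtain ⟨hbx, hbz⟩ := key b hb
    exact three_le_dd_of G' (Or.inl ⟨ha, by simp [hyv, hyx], by simp [hav, hax]⟩)
      (Or.inl ⟨hb, by simp [hyv, hyx], by simp [hbv, hbx]⟩) hG'yz hab haz hbz
  have hddz' : 3 ≤ dd G' z := by
    obtain ⟨a, b, hab, hav, hbv, ha, hb⟩ :=
      exists_two_nbrs_ne G (high_of_nolow hnl hvz.symm) v
    have key : ∀ c, G.Adj z c → c ≠ x ∧ c ≠ y := by
      intro c hc
      constructor
      · rintro rfl; exact hxz hc.symm
      · rintro rfl; exact noyz hc.symm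
    obtain ⟨hax, hay⟩ := key a ha
    obtain ⟨hbx, hby⟩ := key b hb
    exact three_le_dd_of G' (Or.inl ⟨ha, by simp [hzv, hzx], by simp [hav, hax]⟩)
      (Or.inl ⟨hb, by simp [hzv, hzx], by simp [hbv, hbx]⟩) hG'yz.symm hab hay hby
  have hddp' : 3 ≤ dd G' p := by
    obtain ⟨a, b, hab, hax, hbx, ha, hb⟩ :=
      exists_two_nbrs_ne G (high_of_nolow hnl hxp.symm) x
    have key : ∀ c, G.Adj p c → c ≠ v ∧ c ≠ q := by
      intro c hc
      constructor
      · rintro rfl; exact hvp hc.symm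
      · rintro rfl; exact nopq hc
    obtain ⟨hav, haq⟩ := key a ha
    obtain ⟨hbv, hbq⟩ := key b hb
    exact three_le_dd_of G' (Or.inl ⟨ha, by simp [hpv, hpx], by simp [hav, hax]⟩)
      (Or.inl ⟨hb, by simp [hpv, hpx], by simp [hbv, hbx]⟩) hG'pq hab haq hbq
  have hddq' : 3 ≤ dd G' q := by
    obtain ⟨a, b, hab, hax, hbx, ha, hb⟩ :=
      exists_two_nbrs_ne G (high_of_nolow hnl hxq.symm) x
    have key : ∀ c, G.Adj q c → c ≠ v ∧ c ≠ p := by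
      intro c hc
      constructor
      · rintro rfl; exact hvq hc.symm
      · rintro rfl; exact nopq hc.symm
    obtain ⟨hav, hap⟩ := key a ha
    obtain ⟨hbv, hbp⟩ := key b hb
    exact three_le_dd_of G' (Or.inl ⟨ha, by simp [hqv, hqx], by simp [hav, hax]⟩)
      (Or.inl ⟨hb, by simp [hqv, hqx], by simp [hbv, hbx]⟩) hG'pq.symm hab hap hbp
  have hunt : ∀ t, t ≠ v → t ≠ x → t ≠ y → t ≠ z → t ≠ p → t ≠ q →
      ∀ b, G'.Adj t b ↔ G.Adj t b := by
    intro t htv htx hty htz htp htq b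
    refine surg_adj_untouched t (by simp [htv, htx]) ?_
      (by simp [Ne.symm hty, Ne.symm htz, Ne.symm htp, Ne.symm htq]) b
    intro c hc
    simp only [Set.mem_insert_iff, Set.mem_singleton_iff] at hc
    rcases hc with rfl | rfl
    · intro htc
      rcases hvcomp t htc.symm with rfl | rfl | rfl
      · exact htx rfl
      · exact hty rfl
      · exact htz rfl
    · intro htc
      rcases hxcomp t htc.symm with rfl | rfl | rfl
      · exact htv rfl
      · exact htp rfl
      · exact htq rfl
  have hlow' : ∀ t w, lowAt G' t → lowAt G' w → t = w := by
    intro t w ht _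
    exfalso
    by_cases htv : t = v
    · subst htv; rw [lowAt, dd_eq_zero G' t hisov] at ht; omega
    by_cases htx : t = x
    · subst htx; rw [lowAt, dd_eq_zero G' t hisox] at ht; omega
    by_cases hty : t = y
    · subst hty; rw [lowAt] at ht; omega
    by_cases htz : t = z
    · subst htz; rw [lowAt] at ht; omega
    by_cases htp : t = p
    · subst htp; rw [lowAt] at ht; omega
    by_cases htq : t = q
    · subst htq; rw [lowAt] at ht; omega
    · rw [lowAt, dd_eq_of_adj_iff (hunt t htv htx hty htz htp htq)] at ht
      exact hnl t ht
  have hmeas : meas G' < meas G := by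
    refine meas_lt_of_isolating (surg_nonisolated ?_) v ⟨x, hvx⟩ hisov
    intro r hr
    simp only [List.mem_cons, List.mem_singleton, List.not_mem_nil, or_false] at hr
    rcases hr with rfl | rfl
    · exact ⟨⟨v, hvy.symm⟩, ⟨v, hvz.symm⟩⟩
    · exact ⟨⟨x, hxp.symm⟩, ⟨x, hxq.symm⟩⟩
  have hsub' : G'.ContainsSubdivision (completeGraph (Fin 4)) :=
    hih G' hmeas hlow' ⟨y, hddy'⟩
  -- first lift: to G1 = surg G {x} [(p, q)], replacing edge (y,z) by y-v-z
  set G1 := surg G {x} [(p, q)] with hG1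
  have hisox' : ∀ b, ¬ G1.Adj x b := surg_isolated x (by simp) (by simp [hpx, hqx])
  have hsub1 : G1.ContainsSubdivision (completeGraph (Fin 4)) := by
    refine lift_subdivision K4nbr (G' := G')
      (Walk.cons ((surg_adj G {x} [(p, q)] y v).mpr (Or.inl ⟨hvy.symm, by simp [hyx], by simp [Ne.symm hxv]⟩))
        (Walk.cons ((surg_adj G {x} [(p, q)] v z).mpr (Or.inl ⟨hvz, by simp [Ne.symm hxv], by simp [hzx]⟩)) Walk.nil))
      ?_ ?_ ?_ hsub'
    · simp [Walk.cons_isPath_iff, hyv, Ne.symm hzv, hyz]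
    · intro a b hab
      rcases hab with ⟨h, hS1, hS2⟩ | ⟨hne', r, hr, hc⟩
      · simp only [Set.mem_insert_iff, Set.mem_singleton_iff, not_or] at hS1 hS2
        exact Or.inl (Or.inl ⟨h, by simp [hS1.2], by simp [hS2.2]⟩)
      · simp only [List.mem_cons, List.mem_singleton, List.not_mem_nil, or_false] at hr
        rcases hr with rfl | rfl
        · rcases hc with ⟨rfl, rfl⟩ | ⟨rfl, rfl⟩
          · exact Or.inr rfl
          · exact Or.inr Sym2.eq_swap
        · exact Or.inl (Or.inr ⟨hne', (p, q), by simp, hc⟩)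
    · intro t ht
      simp only [Walk.support_cons, Walk.support_nil, List.mem_cons, List.mem_singleton] at ht
      rcases ht with rfl | rfl | rfl | h
      · exact Or.inl rfl
      · exact Or.inr (Or.inr hisov)
      · exact Or.inr (Or.inl rfl)
      · exact absurd h List.not_mem_nil
  -- second lift: to G, replacing edge (p,q) by p-x-q
  refine lift_subdivision K4nbr (G' := G1)
    (Walk.cons hxp.symm (Walk.cons hxq Walk.nil)) ?_ ?_ ?_ hsub1
  · simp [Walk.cons_isPath_iff, hpx, Ne.symm hqx, hpq]
  · intro a b hab
    rcases hab with ⟨h, _, _⟩ | ⟨hne', r, hr, hc⟩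
    · exact Or.inl h
    · simp only [List.mem_singleton] at hr
      subst hr
      rcases hc with ⟨rfl, rfl⟩ | ⟨rfl, rfl⟩
      · exact Or.inr rfl
      · exact Or.inr Sym2.eq_swap
  · intro t ht
    simp only [Walk.support_cons, Walk.support_nil, List.mem_cons, List.mem_singleton] at ht
    rcases ht with rfl | rfl | rfl | h
    · exact Or.inl rfl
    · exact Or.inr (Or.inr hisox')
    · exact Or.inr (Or.inl rfl)
    · exact absurd h List.not_mem_nil

end Cases

theorem keyS {V : Type*} [Fintype V] : ∀ (n : ℕ) (G : SimpleGraph V), meas G ≤ n →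
    (∀ z w, lowAt G z → lowAt G w → z = w) → (∃ z, 3 ≤ dd G z) →
    G.ContainsSubdivision (completeGraph (Fin 4)) := by
  intro n
  induction n using Nat.strong_induction_on with
  | _ n IH =>
  intro G hm hlow hex
  have hih : IHt G := fun G' hlt hl he => IH (meas G') (lt_of_lt_of_le hlt hm) G' le_rfl hl he
  by_cases hL : ∃ v, lowAt G v
  · obtain ⟨v, hv⟩ := hL
    have hv' := hv
    rw [lowAt] at hv'
    rcases (by omega : dd G v = 1 ∨ dd G v = 2) with h1 | h2
    · obtain ⟨x, hvx, hcomp⟩ := nbrs_of_dd_one G h1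
      exact caseA1 G hlow hex hih v x h1 hvx hcomp
    · obtain ⟨x, y, hxy, hvx, hvy, hcomp⟩ := nbrs_of_dd_two G h2
      by_cases hadj : G.Adj x y
      · have hxv : x ≠ v := hvx.ne'
        have hyv : y ≠ v := hvy.ne'
        have hdx3 : 3 ≤ dd G x := high_of_ne hlow hv hxv hvx.symm
        have hdy3 : 3 ≤ dd G y := high_of_ne hlow hv hyv hvy.symm
        by_cases h4x : 4 ≤ dd G x
        · by_cases h4y : 4 ≤ dd G y
          · exact caseA2b G hlow hih v x y h2 hxy hvx hvy hcomp h4x h4y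
          · have hdy : dd G y = 3 := by omega
            obtain ⟨p, hpv, hpx, hyp, hycomp⟩ :=
              nbrs_of_dd_three G hdy hvy.symm hadj.symm hvx.ne
            have hcomp' : ∀ w, G.Adj v w → w = y ∨ w = x := fun w hw => (hcomp w hw).symm
            by_cases hpx' : G.Adj p x
            · exact caseA2c2 G hlow hih v y x h2 (Ne.symm hxy) hvy hvx hcomp' h4x
            · exact caseA2c1 G hlow hih v y x p h2 (Ne.symm hxy) hvy hvx hcomp'
                hadj.symm hpv hpx hyp hycomp hpx'
        · have hdx : dd G x = 3 := by omega
          obtain ⟨p, hpv, hpy, hxp, hxcomp⟩ :=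
            nbrs_of_dd_three G hdx hvx.symm hadj hvy.ne
          by_cases hpy' : G.Adj p y
          · by_cases h4y : 4 ≤ dd G y
            · exact caseA2c2 G hlow hih v x y h2 hxy hvx hvy hcomp h4y
            · have hdy : dd G y = 3 := by omega
              obtain ⟨c, hcv, hcx, hyc, hycomp0⟩ :=
                nbrs_of_dd_three G hdy hvy.symm hadj.symm hvx.ne
              have hcp : p = c := by
                rcases hycomp0 p hpy'.symm with rfl | rfl | rfl
                · exact absurd rfl hpv
                · exact absurd hxp (G.irrefl)
                · rfl
              subst hcp
              have hycomp : ∀ w, G.Adj y w → w = v ∨ w = x ∨ w = p := hycomp0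
              exact caseA2c3 G hlow hih v x y p h2 hxy hvx hvy hcomp hpv hxp
                hpy'.symm hxcomp hycomp
          · exact caseA2c1 G hlow hih v x y p h2 hxy hvx hvy hcomp hadj hpv hpy
              hxp hxcomp hpy'
      · exact caseA2a G hlow hih v x y h2 hxy hvx hvy hcomp hadj
  · push_neg at hL
    have hnl : ∀ z, ¬ lowAt G z := hL
    by_cases h4 : ∃ v, 4 ≤ dd G v
    · obtain ⟨v, h4v⟩ := h4
      obtain ⟨u, hvu⟩ := exists_nbr (by omega : 1 ≤ dd G v)
      exact caseB1 G hnl hih v u h4v hvu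
    · push_neg at h4
      have hmax : ∀ t, dd G t ≤ 3 := fun t => by have := h4 t; omega
      by_cases htri : ∃ a b c, G.Adj a b ∧ G.Adj b c ∧ G.Adj a c
      · obtain ⟨t1, t2, t3, h12, h23, h13⟩ := htri
        have d1 : dd G t1 = 3 := by
          have := high_of_nolow hnl h12; have := hmax t1; omega
        have d2 : dd G t2 = 3 := by
          have := high_of_nolow hnl h23; have := hmax t2; omega
        have d3 : dd G t3 = 3 := by
          have := high_of_nolow hnl h23.symm; have := hmax t3; omega
        obtain ⟨u1, hu1t2, hu1t3, hu1, c1⟩ := nbrs_of_dd_three G d1 h12 h13 h23.ne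
        obtain ⟨u2, hu2t1, hu2t3, hu2, c2⟩ := nbrs_of_dd_three G d2 h12.symm h23 h13.ne
        obtain ⟨u3, hu3t1, hu3t2, hu3, c3⟩ := nbrs_of_dd_three G d3 h13.symm h23.symm h12.ne
        by_cases e12 : u1 = u2
        · subst e12
          by_cases e13 : u1 = u3
          · subst e13
            exact caseAllEq G t1 t2 t3 u1 h12 h13 h23 hu1 hu2 hu3
          · exact caseTwoEq G hnl hih t1 t2 t3 u1 u3 h12 h13 h23 hu1 hu2 hu3
              hu1t3 hu3t1 hu3t2 e13 c1 c2 c3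
        · by_cases e13 : u1 = u3
          · subst e13
            exact caseTwoEq G hnl hih t1 t3 t2 u1 u2 h13 h12 h23.symm hu1 hu3 hu2
              hu1t2 hu2t1 hu2t3 e12
              (fun z hz => by rcases c1 z hz with h | h | h <;> tauto)
              (fun z hz => by rcases c3 z hz with h | h | h <;> tauto)
              (fun z hz => by rcases c2 z hz with h | h | h <;> tauto)
          · by_cases e23 : u2 = u3
            · subst e23
              exact caseTwoEq G hnl hih t2 t3 t1 u2 u1 h23 h12.symm h13.symm hu2 hu3 hu1
                hu2t1 hu1t2 hu1t3 (Ne.symm e12)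
                (fun z hz => by rcases c2 z hz with h | h | h <;> tauto)
                (fun z hz => by rcases c3 z hz with h | h | h <;> tauto)
                (fun z hz => by rcases c1 z hz with h | h | h <;> tauto)
            · exact caseAllDiff G hnl hih t1 t2 t3 u1 u2 u3 h12 h13 h23 hu1 hu2 hu3
                hu1t2 hu1t3 hu2t1 hu2t3 hu3t1 hu3t2 e12 e13 e23 c1 c2 c3
      · push_neg at htri
        have hnt : ∀ a b c, G.Adj a b → G.Adj b c → G.Adj a c → False := by
          intro a b c hab hbc hac
          exact htri a b c hab hbc hac
        obtain ⟨z0, h3z0⟩ := hex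
        have hdz0 : dd G z0 = 3 := by have := hmax z0; omega
        exact caseBnotri G hnl hmax hih hnt z0 hdz0

end Machinery

/-- Dirac: every finite simple graph of minimum degree at least 3 contains a
subdivision of `K₄`. -/
theorem stmt0 {V : Type*} [Fintype V] (G : SimpleGraph V) [DecidableRel G.Adj]
    (h : 3 ≤ G.minDegree) :
    G.ContainsSubdivision (completeGraph (Fin 4)) := by
  have hV : Nonempty V := by
    by_contra hc
    rw [not_nonempty_iff] at hc
    have : G.minDegree = 0 := by
      unfold SimpleGraph.minDegree
      rw [Finset.univ_eq_empty, Finset.image_empty, Finset.min_empty]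
      rfl
    omega
  have hdeg : ∀ v, 3 ≤ dd G v := fun v => by
    rw [dd_eq_degree]
    exact le_trans h (G.minDegree_le_degree v)
  refine keyS (meas G) G le_rfl ?_ ?_
  · intro z w hz _
    exact absurd (hdeg z) (by rcases hz with ⟨_, h2⟩; omega)
  · exact ⟨Classical.arbitrary V, hdeg _⟩
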